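/- arXiv:2312.13738 — 8 statements merged into one kernel-verified Lean document; each statement's English description precedes it below -/
import Mathlib

section
/- Let g be an element of SL₂(ℂ). Then σ_s(g) = −g⁻¹ if and only if there exist a ∈ ℂ and b, c ∈ ℝ with |a|² + b·c = −1 such that g is the matrix with rows (a, b) and (c, −conj(a)). (Together with the description of the solutions of σ_s(g) = g⁻¹, this computes the 1-cocycles Z¹(Gal(ℂ/ℝ), PGL₂(ℂ)) for the Galois action induced by σ_s, where PGL₂(ℂ) = SL₂(ℂ)/{±I}.) -/
open Matrix Complex

/-- For `g ∈ SL₂(ℂ)`, `σ_s(g) = −g⁻¹` if and only if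
`g = !![a, b; c, −conj a]` with `a ∈ ℂ`, `b, c ∈ ℝ`, `|a|² + b·c = −1`. -/
theorem statement3 (g : Matrix.SpecialLinearGroup (Fin 2) ℂ) :
    (↑g : Matrix (Fin 2) (Fin 2) ℂ).map (starRingEnd ℂ)
        = -(↑(g⁻¹) : Matrix (Fin 2) (Fin 2) ℂ) ↔
      ∃ (a : ℂ) (b c : ℝ), ‖a‖ ^ 2 + b * c = -1 ∧
        (↑g : Matrix (Fin 2) (Fin 2) ℂ)
          = !![a, (b : ℂ); (c : ℂ), -starRingEnd ℂ a] := by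
  have hdet : Matrix.det (↑g : Matrix (Fin 2) (Fin 2) ℂ) = 1 := g.2
  rw [Matrix.det_fin_two] at hdet
  have hinv : (↑(g⁻¹) : Matrix (Fin 2) (Fin 2) ℂ) = Matrix.adjugate ↑g :=
    Matrix.SpecialLinearGroup.coe_inv g
  constructor
  · intro h
    rw [hinv, Matrix.adjugate_fin_two] at h
    have h00 := congrFun (congrFun h 0) 0
    have h01 := congrFun (congrFun h 0) 1
    have h10 := congrFun (congrFun h 1) 0
    simp [Matrix.map_apply] at h00 h01 h10
    refine ⟨(g : Matrix (Fin 2) (Fin 2) ℂ) 0 0,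
      ((g : Matrix (Fin 2) (Fin 2) ℂ) 0 1).re,
      ((g : Matrix (Fin 2) (Fin 2) ℂ) 1 0).re, ?_, ?_⟩
    · have hd : (g : Matrix (Fin 2) (Fin 2) ℂ) 1 1 =
        -starRingEnd ℂ ((g : Matrix (Fin 2) (Fin 2) ℂ) 0 0) := by
        linear_combination h00
      have hb' : ((g : Matrix (Fin 2) (Fin 2) ℂ) 0 1) =
        (((g : Matrix (Fin 2) (Fin 2) ℂ) 0 1).re : ℂ) :=
        (Complex.conj_eq_iff_re.mp h01).symm
      have hc' : ((g : Matrix (Fin 2) (Fin 2) ℂ) 1 0) =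
        (((g : Matrix (Fin 2) (Fin 2) ℂ) 1 0).re : ℂ) :=
        (Complex.conj_eq_iff_re.mp h10).symm
      rw [hd, hb', hc'] at hdet
      have hm : ((g : Matrix (Fin 2) (Fin 2) ℂ) 0 0) *
          (-(starRingEnd ℂ) ((g : Matrix (Fin 2) (Fin 2) ℂ) 0 0))
          = -((Complex.normSq ((g : Matrix (Fin 2) (Fin 2) ℂ) 0 0) : ℝ) : ℂ) := by
        rw [mul_neg, Complex.mul_conj]
      rw [hm] at hdet
      have key : ((Complex.normSq ((g : Matrix (Fin 2) (Fin 2) ℂ) 0 0)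
          + ((g : Matrix (Fin 2) (Fin 2) ℂ) 0 1).re
            * ((g : Matrix (Fin 2) (Fin 2) ℂ) 1 0).re : ℝ) : ℂ) = ((-1 : ℝ) : ℂ) := by
        push_cast
        linear_combination -hdet
      have key' := Complex.ofReal_injective key
      rw [Complex.sq_norm]
      linarith
    · ext i j
      fin_cases i <;> fin_cases j <;>
        simp_all [Matrix.map_apply, Complex.ext_iff] <;> linarith
  · rintro ⟨a, b, c, habc, hg⟩
    rw [Complex.sq_norm] at habc
    rw [hinv, hg, Matrix.adjugate_fin_two]
    ext i j
    fin_cases i <;> fin_cases j <;>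
      simp [Matrix.map_apply, Complex.ext_iff]
end

section
/- Let g be an element of SL₂(ℂ). Then σ_c(g) = −g⁻¹ if and only if there exist x, y ∈ ℝ and b ∈ ℂ with |b|² − x·y = 1 such that g is the matrix with rows (i·x, b) and (−conj(b), i·y). (Together with the description of the solutions of σ_c(g) = g⁻¹, this computes the 1-cocycles Z¹(Gal(ℂ/ℝ), PGL₂(ℂ)) for the Galois action induced by σ_c, where PGL₂(ℂ) = SL₂(ℂ)/{±I}.) -/
open Matrix Complex

/-- For `g ∈ SL₂(ℂ)`, `σ_c(g) = (gᴴ)⁻¹ = −g⁻¹` if and only if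
`g = !![i·x, b; −conj b, i·y]` with `x, y ∈ ℝ`, `b ∈ ℂ`, `|b|² − x·y = 1`. -/
theorem statement4 (g : Matrix.SpecialLinearGroup (Fin 2) ℂ) :
    ((↑g : Matrix (Fin 2) (Fin 2) ℂ)ᴴ)⁻¹ = -(↑(g⁻¹) : Matrix (Fin 2) (Fin 2) ℂ) ↔
      ∃ (x y : ℝ) (b : ℂ), ‖b‖ ^ 2 - x * y = 1 ∧
        (↑g : Matrix (Fin 2) (Fin 2) ℂ)
          = !![Complex.I * (x : ℂ), b; -starRingEnd ℂ b, Complex.I * (y : ℂ)] := by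
  have hdet : Matrix.det (↑g : Matrix (Fin 2) (Fin 2) ℂ) = 1 := g.2
  have hmul : (↑g : Matrix (Fin 2) (Fin 2) ℂ) * (↑(g⁻¹) : Matrix (Fin 2) (Fin 2) ℂ) = 1 := by
    rw [← Matrix.SpecialLinearGroup.coe_mul, mul_inv_cancel,
      Matrix.SpecialLinearGroup.coe_one]
  have hneg : (-(↑g : Matrix (Fin 2) (Fin 2) ℂ))⁻¹ = -(↑(g⁻¹) : Matrix (Fin 2) (Fin 2) ℂ) := by
    apply Matrix.inv_eq_right_inv
    rw [neg_mul_neg, hmul]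
  constructor
  · intro h
    have h1 : ((↑g : Matrix (Fin 2) (Fin 2) ℂ)ᴴ)⁻¹ = (-(↑g : Matrix (Fin 2) (Fin 2) ℂ))⁻¹ := by
      rw [h, hneg]
    have h2 : ((↑g : Matrix (Fin 2) (Fin 2) ℂ)ᴴ) = -(↑g : Matrix (Fin 2) (Fin 2) ℂ) := by
      have hu1 : IsUnit ((↑g : Matrix (Fin 2) (Fin 2) ℂ)ᴴ).det := by
        rw [Matrix.det_conjTranspose, hdet]; simp
      have hu2 : IsUnit (-(↑g : Matrix (Fin 2) (Fin 2) ℂ)).det := by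
        rw [Matrix.det_neg, hdet]; simp
      calc ((↑g : Matrix (Fin 2) (Fin 2) ℂ)ᴴ) = ((↑g : Matrix (Fin 2) (Fin 2) ℂ)ᴴ)⁻¹⁻¹ :=
              (Matrix.nonsing_inv_nonsing_inv _ hu1).symm
        _ = (-(↑g : Matrix (Fin 2) (Fin 2) ℂ))⁻¹⁻¹ := by rw [h1]
        _ = -(↑g : Matrix (Fin 2) (Fin 2) ℂ) := Matrix.nonsing_inv_nonsing_inv _ hu2
    have e00 := congr_fun (congr_fun h2 0) 0
    have e01 := congr_fun (congr_fun h2 0) 1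
    have e11 := congr_fun (congr_fun h2 1) 1
    simp only [Matrix.conjTranspose_apply, Matrix.neg_apply, RCLike.star_def] at e00 e01 e11
    set a := (↑g : Matrix (Fin 2) (Fin 2) ℂ) 0 0 with ha
    set b := (↑g : Matrix (Fin 2) (Fin 2) ℂ) 0 1 with hb
    set c := (↑g : Matrix (Fin 2) (Fin 2) ℂ) 1 0 with hc
    set d := (↑g : Matrix (Fin 2) (Fin 2) ℂ) 1 1 with hd
    have hare : a.re = 0 := by
      have := congrArg Complex.re e00
      simp only [Complex.conj_re, Complex.neg_re] at this; linarith
    have hdre : d.re = 0 := by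
      have := congrArg Complex.re e11
      simp only [Complex.conj_re, Complex.neg_re] at this; linarith
    have hca : a = Complex.I * (a.im : ℂ) := by
      apply Complex.ext <;> simp [hare]
    have hcd : d = Complex.I * (d.im : ℂ) := by
      apply Complex.ext <;> simp [hdre]
    have hcc : c = -(starRingEnd ℂ b) := by
      have : starRingEnd ℂ c = -b := e01
      have := congrArg (starRingEnd ℂ) this
      simpa using this
    refine ⟨a.im, d.im, b, ?_, ?_⟩
    · have hdet2 : a * d - b * c = 1 := by
        rw [← hdet, Matrix.det_fin_two]
      rw [hca, hcd, hcc] at hdet2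
      have key : ((Complex.normSq b : ℝ) : ℂ) - ((a.im : ℝ) : ℂ) * ((d.im : ℝ) : ℂ) = 1 := by
        rw [← Complex.mul_conj b]
        linear_combination hdet2 - ((a.im : ℂ) * (d.im : ℂ)) * Complex.I_sq
      have hre : Complex.normSq b - a.im * d.im = 1 := by exact_mod_cast key
      rw [← Complex.sq_norm] at hre
      linarith
    · rw [Matrix.eta_fin_two (↑g : Matrix (Fin 2) (Fin 2) ℂ)]
      rw [← ha, ← hb, ← hc, ← hd, hca, hcd, hcc]
      simp
  · rintro ⟨x, y, b, hxy, hg⟩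
    have h2 : ((↑g : Matrix (Fin 2) (Fin 2) ℂ)ᴴ) = -(↑g : Matrix (Fin 2) (Fin 2) ℂ) := by
      rw [hg]
      ext i j
      fin_cases i <;> fin_cases j <;>
        simp [Matrix.conjTranspose_apply, Complex.conj_I, mul_comm]
    rw [h2, hneg]
end

section
/- Let k ≥ 3 be an integer and let ζ_k be a primitive k-th root of unity in ℂ. The normalizer of A_k in SL₂(ℂ) is exactly the union of the subgroup of diagonal matrices diag(a, a⁻¹) (a ∈ ℂ*) and the set of antidiagonal matrices with rows (0, b) and (−b⁻¹, 0) (b ∈ ℂ*). -/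
open Matrix Complex


lemma aux_norm {G : Type*} [Group G] (g w : G)
    (h1 : ∀ n : ℤ, ∃ m : ℤ, g * w^n * g⁻¹ = w^m)
    (h2 : ∀ n : ℤ, ∃ m : ℤ, g⁻¹ * w^n * g = w^m) :
    g ∈ Subgroup.normalizer (Subgroup.zpowers w : Set G) := by
  rw [Subgroup.mem_normalizer_iff]
  intro h
  simp only [Subgroup.mem_zpowers_iff]
  constructor
  · rintro ⟨n, rfl⟩
    obtain ⟨m, hm⟩ := h1 n
    exact ⟨m, hm.symm⟩
  · rintro ⟨n, hn⟩
    obtain ⟨m, hm⟩ := h2 n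
    refine ⟨m, ?_⟩
    rw [← hm, hn]
    group

lemma aux_zpow (ζ : ℂ) (hz : ζ ≠ 0) (ω : Matrix.SpecialLinearGroup (Fin 2) ℂ)
    (hω : (↑ω : Matrix (Fin 2) (Fin 2) ℂ) = !![ζ, 0; 0, ζ⁻¹]) (m : ℤ) :
    ∃ u v : ℂ, u * v = 1 ∧ ((ω^m : _) : Matrix (Fin 2) (Fin 2) ℂ) = !![u, 0; 0, v] := by
  have hnat : ∀ n : ℕ, ((ω^n : _) : Matrix (Fin 2) (Fin 2) ℂ) = !![ζ^n, 0; 0, ζ⁻¹^n] := by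
    intro n
    induction n with
    | zero => simp [Matrix.one_fin_two]
    | succ n ih =>
      rw [pow_succ, Matrix.SpecialLinearGroup.coe_mul, ih, hω, Matrix.mul_fin_two]
      norm_num [pow_succ]
  obtain ⟨n, h | h⟩ := Int.eq_nat_or_neg m <;> subst h
  · refine ⟨ζ^n, ζ⁻¹^n, ?_, ?_⟩
    · rw [← mul_pow, mul_inv_cancel₀ hz, one_pow]
    · rw [zpow_natCast, hnat]
  · refine ⟨ζ⁻¹^n, ζ^n, ?_, ?_⟩
    · rw [← mul_pow, inv_mul_cancel₀ hz, one_pow]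
    · rw [_root_.zpow_neg, zpow_natCast]
      have : (((ω ^ n)⁻¹ : Matrix.SpecialLinearGroup (Fin 2) ℂ) : Matrix (Fin 2) (Fin 2) ℂ) = adjugate ((ω^n : _) : Matrix (Fin 2) (Fin 2) ℂ) := by
        simp [Matrix.SpecialLinearGroup.coe_inv]
      rw [this, hnat, Matrix.adjugate_fin_two]
      norm_num

/-- For `k ≥ 3` and `ζ` a primitive `k`-th root of unity, the normalizer in
`SL₂(ℂ)` of the cyclic subgroup `A_k = ⟨ω⟩`, where `ω = diag(ζ, ζ⁻¹)`, consists exactly of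
the diagonal matrices `diag(a, a⁻¹)` (`a ∈ ℂ*`) and the antidiagonal matrices
`!![0, b; −b⁻¹, 0]` (`b ∈ ℂ*`). -/
theorem statement5 (k : ℕ) (hk : 3 ≤ k) (ζ : ℂ) (hζ : IsPrimitiveRoot ζ k)
    (ω : Matrix.SpecialLinearGroup (Fin 2) ℂ)
    (hω : (↑ω : Matrix (Fin 2) (Fin 2) ℂ) = !![ζ, 0; 0, ζ⁻¹])
    (g : Matrix.SpecialLinearGroup (Fin 2) ℂ) :
    g ∈ Subgroup.normalizer (Subgroup.zpowers ω : Set (Matrix.SpecialLinearGroup (Fin 2) ℂ)) ↔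
      (∃ a : ℂ, a ≠ 0 ∧ (↑g : Matrix (Fin 2) (Fin 2) ℂ) = !![a, 0; 0, a⁻¹]) ∨
      (∃ b : ℂ, b ≠ 0 ∧ (↑g : Matrix (Fin 2) (Fin 2) ℂ) = !![0, b; -b⁻¹, 0]) := by
  have hz : ζ ≠ 0 := hζ.ne_zero (by omega)
  have hsq : ζ⁻¹ ≠ ζ := by
    intro h
    have h2 : ζ ^ 2 = 1 := by
      have : ζ * ζ⁻¹ = 1 := mul_inv_cancel₀ hz
      rw [h] at this
      rw [sq]; exact this
    have := Nat.le_of_dvd (by norm_num) (hζ.dvd_of_pow_eq_one 2 h2)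
    omega
  constructor
  · intro hg
    have hmem : g * ω * g⁻¹ ∈ Subgroup.zpowers ω :=
      (Subgroup.mem_normalizer_iff.mp hg ω).mp (Subgroup.mem_zpowers ω)
    obtain ⟨m, hm⟩ := Subgroup.mem_zpowers_iff.mp hmem
    obtain ⟨u, v, huv, hcoe⟩ := aux_zpow ζ hz ω hω m
    -- matrix equation: g * ω = ω^m * g
    have hgω : g * ω = ω^m * g := by
      rw [hm]; group
    have hmat : (↑g : Matrix (Fin 2) (Fin 2) ℂ) * !![ζ, 0; 0, ζ⁻¹]
        = !![u, 0; 0, v] * (↑g : Matrix (Fin 2) (Fin 2) ℂ) := by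
      rw [← hω, ← hcoe, ← Matrix.SpecialLinearGroup.coe_mul, ← Matrix.SpecialLinearGroup.coe_mul, hgω]
    set a := (↑g : Matrix (Fin 2) (Fin 2) ℂ) 0 0 with ha'
    set b := (↑g : Matrix (Fin 2) (Fin 2) ℂ) 0 1 with hb'
    set c := (↑g : Matrix (Fin 2) (Fin 2) ℂ) 1 0 with hc'
    set d := (↑g : Matrix (Fin 2) (Fin 2) ℂ) 1 1 with hd'
    have heta : (↑g : Matrix (Fin 2) (Fin 2) ℂ) = !![a, b; c, d] := Matrix.eta_fin_two _
    have hdet : a * d - b * c = 1 := by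
      have := g.2
      rw [heta, Matrix.det_fin_two_of] at this
      exact this
    rw [heta, Matrix.mul_fin_two, Matrix.mul_fin_two] at hmat
    have e00 : a * ζ = u * a := by simpa using congrFun (congrFun hmat 0) 0
    have e01 : b * ζ⁻¹ = u * b := by simpa using congrFun (congrFun hmat 0) 1
    have e10 : c * ζ = v * c := by simpa using congrFun (congrFun hmat 1) 0
    have e11 : d * ζ⁻¹ = v * d := by simpa using congrFun (congrFun hmat 1) 1
    by_cases hA : a = 0
    · right
      have hbc : b * c = -1 := by rw [hA] at hdet; linear_combination -hdet
      have hb0 : b ≠ 0 := fun h => by rw [h, zero_mul] at hbc; simp at hbc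
      have hu : u = ζ⁻¹ := by
        have := mul_right_cancel₀ hb0 (by linear_combination e01 : ζ⁻¹ * b = u * b)
        exact this.symm
      have hv : v = ζ := by
        rw [hu] at huv
        have := inv_eq_of_mul_eq_one_right huv
        rw [inv_inv] at this
        exact this.symm
      have hd0 : d = 0 := by
        have : d * (ζ⁻¹ - ζ) = 0 := by rw [hv] at e11; linear_combination e11
        rcases mul_eq_zero.mp this with h | h
        · exact h
        · exact absurd (by linear_combination h) hsq
      refine ⟨b, hb0, ?_⟩
      rw [heta, hA, hd0]
      have h1 : b⁻¹ = -c := inv_eq_of_mul_eq_one_right (by linear_combination -hbc)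
      have hc : c = -b⁻¹ := by linear_combination h1
      rw [hc]
    · left
      have hu : u = ζ := (mul_right_cancel₀ hA (by linear_combination e00 : ζ * a = u * a)).symm
      have hv : v = ζ⁻¹ := by
        rw [hu] at huv
        exact (inv_eq_of_mul_eq_one_right huv).symm
      have hb0 : b = 0 := by
        have : b * (ζ⁻¹ - ζ) = 0 := by rw [hu] at e01; linear_combination e01
        rcases mul_eq_zero.mp this with h | h
        · exact h
        · exact absurd (by linear_combination h) hsq
      have hc0 : c = 0 := by
        have : c * (ζ - ζ⁻¹) = 0 := by rw [hv] at e10; linear_combination e10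
        rcases mul_eq_zero.mp this with h | h
        · exact h
        · exact absurd (by linear_combination -h) hsq
      have hA2 : a * d = 1 := by rw [hb0] at hdet; linear_combination hdet
      refine ⟨a, hA, ?_⟩
      rw [heta, hb0, hc0]
      have : d = a⁻¹ := (inv_eq_of_mul_eq_one_right hA2).symm
      rw [this]
  · rintro (⟨a, ha, hg⟩ | ⟨b, hb, hg⟩)
    · -- diagonal: commutes with ω
      have hc : Commute g ω := by
        apply Subtype.ext
        show ((g * ω : _) : Matrix (Fin 2) (Fin 2) ℂ) = ((ω * g : _) : Matrix (Fin 2) (Fin 2) ℂ)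
        rw [Matrix.SpecialLinearGroup.coe_mul, Matrix.SpecialLinearGroup.coe_mul, hg, hω,
          Matrix.mul_fin_two, Matrix.mul_fin_two]
        norm_num [mul_comm]
      apply aux_norm
      · intro n
        exact ⟨n, by rw [(hc.zpow_right n).eq, mul_inv_cancel_right]⟩
      · intro n
        exact ⟨n, by rw [((hc.zpow_right n).inv_left).eq, inv_mul_cancel_right]⟩
    · -- antidiagonal: semiconjugates ω to ω⁻¹
      have hrel : g * ω = ω⁻¹ * g := by
        apply Subtype.ext
        show ((g * ω : _) : Matrix (Fin 2) (Fin 2) ℂ) = ((ω⁻¹ * g : _) : Matrix (Fin 2) (Fin 2) ℂ)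
        have hinv : ((ω⁻¹ : _) : Matrix (Fin 2) (Fin 2) ℂ) = !![ζ⁻¹, 0; 0, ζ] := by
          simp [Matrix.SpecialLinearGroup.coe_inv, hω, Matrix.adjugate_fin_two]
        rw [Matrix.SpecialLinearGroup.coe_mul, Matrix.SpecialLinearGroup.coe_mul, hg, hω, hinv,
          Matrix.mul_fin_two, Matrix.mul_fin_two]
        norm_num [mul_comm]
      have hsemi : SemiconjBy g ω ω⁻¹ := hrel
      apply aux_norm
      · intro n
        refine ⟨-n, ?_⟩
        rw [(hsemi.zpow_right n).eq, mul_inv_cancel_right]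
        group
      · intro n
        refine ⟨-n, ?_⟩
        have hx := (hsemi.inv_symm_left.zpow_right (-n)).eq
        have hy : (ω⁻¹) ^ (-n) = ω ^ n := by group
        rw [hy] at hx
        rw [hx, inv_mul_cancel_right]
end

section
/- Let k ≥ 3 be an odd integer and let g be an element of the normalizer of A_k in SL₂(ℂ). Then σ_s(g)·g ∈ A_k if and only if there exists h ∈ A_k such that either g = diag(a, a⁻¹)·h for some a ∈ ℂ with |a| = 1, or g = m(x)·h for some nonzero x ∈ ℝ, where m(x) is the matrix with rows (0, i·x) and (i·x⁻¹, 0). (This computes, for k odd, the 1-cocycles Z¹(Gal(ℂ/ℝ), N/A_k) for the Galois action on N/A_k induced by σ_s, where N is the normalizer of A_k.) -/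
open Matrix Complex

lemma aux_pow (ζ : ℂ) (ω : Matrix.SpecialLinearGroup (Fin 2) ℂ)
    (hω : (↑ω : Matrix (Fin 2) (Fin 2) ℂ) = !![ζ, 0; 0, ζ⁻¹]) (n : ℤ) :
    ((ω ^ n : Matrix.SpecialLinearGroup (Fin 2) ℂ) : Matrix (Fin 2) (Fin 2) ℂ)
      = !![ζ ^ n, 0; 0, ζ ^ (-n)] := by
  have hnat : ∀ m : ℕ, ((ω ^ m : Matrix.SpecialLinearGroup (Fin 2) ℂ) :
      Matrix (Fin 2) (Fin 2) ℂ) = !![ζ ^ m, 0; 0, ζ⁻¹ ^ m] := by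
    intro m
    induction m with
    | zero => simp [Matrix.one_fin_two]
    | succ m ih =>
      rw [pow_succ, Matrix.SpecialLinearGroup.coe_mul, ih, hω, Matrix.mul_fin_two]
      ring_nf
  cases n with
  | ofNat m =>
    simpa [zpow_natCast, _root_.zpow_neg, inv_pow] using hnat m
  | negSucc m =>
    rw [zpow_negSucc, Matrix.SpecialLinearGroup.coe_inv, hnat (m+1),
      Matrix.adjugate_fin_two_of]
    have h1 : (-Int.negSucc m) = ((m+1 : ℕ) : ℤ) := by
      simp [Int.negSucc_eq]
    rw [zpow_negSucc, h1, zpow_natCast]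
    simp [inv_pow]

lemma aux_mapM (p q r s : ℂ) :
    (!![p, q; r, s]).map (starRingEnd ℂ)
      = !![(starRingEnd ℂ) p, (starRingEnd ℂ) q; (starRingEnd ℂ) r, (starRingEnd ℂ) s] := by
  ext i j
  fin_cases i <;> fin_cases j <;> simp

lemma aux_sigma (g : Matrix.SpecialLinearGroup (Fin 2) ℂ) :
    (↑(Matrix.SpecialLinearGroup.map (starRingEnd ℂ) g) : Matrix (Fin 2) (Fin 2) ℂ)
      = (↑g : Matrix (Fin 2) (Fin 2) ℂ).map (starRingEnd ℂ) := by
  rw [Matrix.SpecialLinearGroup.map_apply_coe, RingHom.mapMatrix_apply]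

lemma aux_dichot (k : ℕ) (hk : 3 ≤ k)
    (ζ : ℂ) (hζ : IsPrimitiveRoot ζ k)
    (ω : Matrix.SpecialLinearGroup (Fin 2) ℂ)
    (hω : (↑ω : Matrix (Fin 2) (Fin 2) ℂ) = !![ζ, 0; 0, ζ⁻¹])
    (g : Matrix.SpecialLinearGroup (Fin 2) ℂ)
    (hg : g ∈ Subgroup.normalizer (Subgroup.zpowers ω : Set (Matrix.SpecialLinearGroup (Fin 2) ℂ))) :
    (∃ a : ℂ, a ≠ 0 ∧ (↑g : Matrix (Fin 2) (Fin 2) ℂ) = !![a, 0; 0, a⁻¹]) ∨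
    (∃ b : ℂ, b ≠ 0 ∧ (↑g : Matrix (Fin 2) (Fin 2) ℂ) = !![0, b; -b⁻¹, 0]) := by
  have hζ0 : ζ ≠ 0 := hζ.ne_zero (by omega)
  have hζ2 : ζ ^ 2 ≠ 1 := by
    intro h
    have := Nat.le_of_dvd (by norm_num) ((hζ.pow_eq_one_iff_dvd 2).mp h)
    omega
  have hkill : ∀ z : ℂ, ζ ^ 2 * z = z → z = 0 := by
    intro z h
    have h2 : (ζ ^ 2 - 1) * z = 0 := by linear_combination h
    rcases mul_eq_zero.mp h2 with h3 | h3
    · exact absurd (sub_eq_zero.mp h3) hζ2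
    · exact h3
  rw [Subgroup.mem_normalizer_iff] at hg
  obtain ⟨n, hn⟩ := (hg ω).mp (Subgroup.mem_zpowers ω)
  have hn' : ω ^ n = g * ω * g⁻¹ := hn
  have hgω : g * ω = ω ^ n * g := by rw [hn']; group
  have hM : (↑g : Matrix (Fin 2) (Fin 2) ℂ) * (↑ω : Matrix (Fin 2) (Fin 2) ℂ)
      = (↑(ω ^ n) : Matrix (Fin 2) (Fin 2) ℂ) * (↑g : Matrix (Fin 2) (Fin 2) ℂ) := by
    have := congrArg (fun m : Matrix.SpecialLinearGroup (Fin 2) ℂ =>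
      (↑m : Matrix (Fin 2) (Fin 2) ℂ)) hgω
    simpa using this
  set a := (↑g : Matrix (Fin 2) (Fin 2) ℂ) 0 0 with ha'
  set b := (↑g : Matrix (Fin 2) (Fin 2) ℂ) 0 1 with hb'
  set c := (↑g : Matrix (Fin 2) (Fin 2) ℂ) 1 0 with hc'
  set d := (↑g : Matrix (Fin 2) (Fin 2) ℂ) 1 1 with hd'
  have hMg : (↑g : Matrix (Fin 2) (Fin 2) ℂ) = !![a, b; c, d] := Matrix.eta_fin_two _
  have hdet : a * d - b * c = 1 := by
    have := g.prop
    rwa [Matrix.det_fin_two] at this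
  rw [hMg, hω, aux_pow ζ ω hω n, Matrix.mul_fin_two, Matrix.mul_fin_two] at hM
  have e00 : a * ζ = ζ ^ n * a := by
    have := congrFun (congrFun hM 0) 0; simpa using this
  have e01 : b * ζ⁻¹ = ζ ^ n * b := by
    have := congrFun (congrFun hM 0) 1; simpa using this
  have e10 : c * ζ = ζ ^ (-n) * c := by
    have := congrFun (congrFun hM 1) 0; simpa using this
  have e11 : d * ζ⁻¹ = ζ ^ (-n) * d := by
    have := congrFun (congrFun hM 1) 1; simpa using this
  by_cases ha : a = 0
  · -- antidiagonal
    right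
    have hb : b ≠ 0 := by
      intro hb0; rw [ha, hb0] at hdet; simp at hdet
    have hc : c ≠ 0 := by
      intro hc0; rw [ha, hc0] at hdet; simp at hdet
    have hzn : ζ ^ (-n) = ζ := by
      have h2 : ζ ^ (-n) * c = ζ * c := by linear_combination -e10
      exact mul_right_cancel₀ hc h2
    have hd0 : d = 0 := by
      apply hkill
      have : ζ * (d * ζ⁻¹) = ζ * (ζ * d) := by rw [e11, hzn]
      calc ζ ^ 2 * d = ζ * (ζ * d) := by ring
        _ = ζ * (d * ζ⁻¹) := this.symm
        _ = d * (ζ * ζ⁻¹) := by ring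
        _ = d := by rw [mul_inv_cancel₀ hζ0, mul_one]
    refine ⟨b, hb, ?_⟩
    rw [hMg, ha, hd0]
    congr 1
    have hbc : b * c = -1 := by linear_combination -hdet + d * ha
    have : c = -b⁻¹ := by
      field_simp
      linear_combination hbc
    rw [this]
  · -- diagonal
    left
    have hzn : ζ ^ n = ζ := by
      have h2 : ζ ^ n * a = ζ * a := by linear_combination -e00
      exact mul_right_cancel₀ ha h2
    have hb0 : b = 0 := by
      apply hkill
      have : ζ * (b * ζ⁻¹) = ζ * (ζ * b) := by rw [e01, hzn]
      calc ζ ^ 2 * b = ζ * (ζ * b) := by ring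
        _ = ζ * (b * ζ⁻¹) := this.symm
        _ = b * (ζ * ζ⁻¹) := by ring
        _ = b := by rw [mul_inv_cancel₀ hζ0, mul_one]
    have hznn : ζ ^ (-n) = ζ⁻¹ := by rw [_root_.zpow_neg, hzn]
    have hc0 : c = 0 := by
      apply hkill
      have : (c * ζ) * ζ = (ζ⁻¹ * c) * ζ := by rw [e10, hznn]
      calc ζ ^ 2 * c = (c * ζ) * ζ := by ring
        _ = (ζ⁻¹ * c) * ζ := this
        _ = c * (ζ⁻¹ * ζ) := by ring
        _ = c := by rw [inv_mul_cancel₀ hζ0, mul_one]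
    refine ⟨a, ha, ?_⟩
    rw [hMg, hb0, hc0]
    congr 1
    have : d = a⁻¹ := by
      field_simp
      linear_combination hdet + c * hb0
    rw [this]

lemma aux_forward (k : ℕ) (hk : 3 ≤ k) (hodd : Odd k)
    (ζ : ℂ) (hζ : IsPrimitiveRoot ζ k)
    (ω : Matrix.SpecialLinearGroup (Fin 2) ℂ)
    (hω : (↑ω : Matrix (Fin 2) (Fin 2) ℂ) = !![ζ, 0; 0, ζ⁻¹])
    (g : Matrix.SpecialLinearGroup (Fin 2) ℂ)
    (hgdi : (∃ a : ℂ, a ≠ 0 ∧ (↑g : Matrix (Fin 2) (Fin 2) ℂ) = !![a, 0; 0, a⁻¹]) ∨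
      (∃ b : ℂ, b ≠ 0 ∧ (↑g : Matrix (Fin 2) (Fin 2) ℂ) = !![0, b; -b⁻¹, 0]))
    (hmem : Matrix.SpecialLinearGroup.map (starRingEnd ℂ) g * g ∈ Subgroup.zpowers ω) :
      ∃ h ∈ Subgroup.zpowers ω,
        (∃ a : ℂ, ‖a‖ = 1 ∧
          (↑g : Matrix (Fin 2) (Fin 2) ℂ)
            = !![a, 0; 0, a⁻¹] * (↑h : Matrix (Fin 2) (Fin 2) ℂ)) ∨
        (∃ x : ℝ, x ≠ 0 ∧
          (↑g : Matrix (Fin 2) (Fin 2) ℂ)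
            = !![0, Complex.I * (x : ℂ); Complex.I * (x : ℂ)⁻¹, 0]
                * (↑h : Matrix (Fin 2) (Fin 2) ℂ)) := by
  have hζ0 : ζ ≠ 0 := hζ.ne_zero (by omega)
  have hζk : ζ ^ k = 1 := hζ.pow_eq_one
  have hnorm : ‖ζ‖ = 1 := Complex.norm_eq_one_of_pow_eq_one hζk (by omega)
  have habsζ : ‖ζ‖ = 1 := hnorm
  have hconjζ : ∀ j : ℤ, (starRingEnd ℂ) (ζ ^ j) = ζ ^ (-j) := by
    intro j
    rw [map_zpow₀, show (starRingEnd ℂ) ζ = ζ⁻¹ from (RCLike.inv_eq_conj hnorm).symm,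
      _root_.inv_zpow, ← _root_.zpow_neg]
  have hzj : ∀ j : ℤ, ζ ^ j ≠ 0 := fun j => zpow_ne_zero j hζ0
  have hzadd : ∀ i j : ℤ, ζ ^ (i + j) = ζ ^ i * ζ ^ j := fun i j => zpow_add₀ hζ0 i j
  obtain ⟨m, hm⟩ := Subgroup.mem_zpowers_iff.mp hmem
  have hmM : (!![ζ ^ m, 0; 0, ζ ^ (-m)] : Matrix (Fin 2) (Fin 2) ℂ)
      = (↑g : Matrix (Fin 2) (Fin 2) ℂ).map (starRingEnd ℂ) * (↑g : Matrix (Fin 2) (Fin 2) ℂ) := by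
    rw [← aux_pow ζ ω hω m, hm, Matrix.SpecialLinearGroup.coe_mul, aux_sigma]
  rcases hgdi with ⟨a, ha0, hga⟩ | ⟨b, hb0, hgb⟩
  · rw [hga, aux_mapM, Matrix.mul_fin_two] at hmM
    have e : ζ ^ m = (starRingEnd ℂ) a * a := by
      have := congrFun (congrFun hmM 0) 0; simpa using this
    have haa : ‖a‖ = 1 := by
      have h1 : ‖a‖ * ‖a‖ = 1 := by
        have h2 := congrArg norm e
        rw [norm_zpow, habsζ, _root_.one_zpow, norm_mul, Complex.norm_conj] at h2
        exact h2.symm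
      rcases mul_self_eq_one_iff.mp h1 with h | h
      · exact h
      · have := norm_nonneg a; linarith
    exact ⟨1, Subgroup.one_mem _, Or.inl ⟨a, haa, by rw [hga]; simp⟩⟩
  · rw [hgb, aux_mapM, Matrix.mul_fin_two] at hmM
    have e : ζ ^ m = (starRingEnd ℂ) b * -b⁻¹ := by
      have := congrFun (congrFun hmM 0) 0; simpa using this
    set j : ℤ := m * (((k+1)/2 : ℕ) : ℤ) with hj
    have hdiv : ((k+1)/2 : ℕ) * 2 = k + 1 :=
      Nat.div_mul_cancel (by obtain ⟨t, ht⟩ := hodd; omega)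
    have hdiv' : ((((k+1)/2 : ℕ) : ℤ) * 2) = (k : ℤ) + 1 := by exact_mod_cast hdiv
    have h2j : ζ ^ (2 * j) = ζ ^ m := by
      have heq : 2 * j = m * (k : ℤ) + m := by
        calc 2 * j = m * ((((k+1)/2 : ℕ) : ℤ) * 2) := by rw [hj]; ring
          _ = m * ((k : ℤ) + 1) := by rw [hdiv']
          _ = m * (k : ℤ) + m := by ring
      rw [heq, hzadd, mul_comm m (k : ℤ), _root_.zpow_mul, zpow_natCast, hζk, _root_.one_zpow, one_mul]
    have hbconj : (starRingEnd ℂ) b = -b * ζ ^ m := by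
      have h1 : (-b) * ζ ^ m = (-b) * ((starRingEnd ℂ) b * -b⁻¹) := by rw [← e]
      rw [show (-b) * ((starRingEnd ℂ) b * -b⁻¹) = (starRingEnd ℂ) b * (b * b⁻¹) by ring,
        mul_inv_cancel₀ hb0, mul_one] at h1
      linear_combination -h1
    set x0 : ℂ := -Complex.I * b * ζ ^ j with hx0
    have hx0conj : (starRingEnd ℂ) x0 = x0 := by
      have h1 : (starRingEnd ℂ) x0 = Complex.I * (starRingEnd ℂ) b * ζ ^ (-j) := by
        rw [hx0, _root_.map_mul, _root_.map_mul, hconjζ j, map_neg, Complex.conj_I]; ring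
      rw [h1, hbconj, ← h2j,
        show Complex.I * (-b * ζ ^ (2*j)) * ζ ^ (-j)
          = -Complex.I * b * (ζ ^ (2*j) * ζ ^ (-j)) by ring, ← hzadd,
        show (2*j + -j : ℤ) = j by ring]
    have hx0re : ((x0.re : ℝ) : ℂ) = x0 := Complex.conj_eq_iff_re.mp hx0conj
    have hx0ne : x0 ≠ 0 := by
      rw [hx0]
      exact mul_ne_zero (mul_ne_zero (neg_ne_zero.mpr Complex.I_ne_zero) hb0) (hzj j)
    have hxne : x0.re ≠ 0 := by
      intro h0
      apply hx0ne
      rw [← hx0re, h0, Complex.ofReal_zero]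
    refine ⟨ω ^ j, Subgroup.mem_zpowers_iff.mpr ⟨j, rfl⟩, Or.inr ⟨x0.re, hxne, ?_⟩⟩
    have hccalc1 : Complex.I * ((x0.re : ℝ) : ℂ) * ζ ^ (-j) = b := by
      rw [hx0re, hx0,
        show Complex.I * (-Complex.I * b * ζ ^ j) * ζ ^ (-j)
          = -(Complex.I * Complex.I) * b * (ζ ^ j * ζ ^ (-j)) by ring,
        Complex.I_mul_I, ← hzadd, show (j + -j : ℤ) = 0 by ring, zpow_zero]
      ring
    have hxC : ((x0.re : ℝ) : ℂ) ≠ 0 := by rw [hx0re]; exact hx0ne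
    have hccalc2 : Complex.I * (((x0.re : ℝ) : ℂ))⁻¹ * ζ ^ j = -b⁻¹ := by
      have hprod : b * (Complex.I * (((x0.re : ℝ) : ℂ))⁻¹ * ζ ^ j) = -1 := by
        rw [← hccalc1,
          show Complex.I * ((x0.re : ℝ) : ℂ) * ζ ^ (-j) * (Complex.I * (((x0.re : ℝ) : ℂ))⁻¹ * ζ ^ j)
            = (Complex.I * Complex.I) * (((x0.re : ℝ) : ℂ) * (((x0.re : ℝ) : ℂ))⁻¹)
              * (ζ ^ (-j) * ζ ^ j) by ring,
          Complex.I_mul_I, mul_inv_cancel₀ hxC, ← hzadd, show (-j + j : ℤ) = 0 by ring,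
          zpow_zero]
        ring
      calc Complex.I * (((x0.re : ℝ) : ℂ))⁻¹ * ζ ^ j
          = b⁻¹ * (b * (Complex.I * (((x0.re : ℝ) : ℂ))⁻¹ * ζ ^ j)) := by
            rw [inv_mul_cancel_left₀ hb0]
        _ = b⁻¹ * (-1) := by rw [hprod]
        _ = -b⁻¹ := by ring
    rw [hgb, aux_pow ζ ω hω j, Matrix.mul_fin_two]
    rw [show ((0:ℂ) * ζ ^ j + Complex.I * ((x0.re : ℝ) : ℂ) * 0) = 0 by ring,
      show ((0:ℂ) * 0 + Complex.I * ((x0.re : ℝ) : ℂ) * ζ ^ (-j))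
        = Complex.I * ((x0.re : ℝ) : ℂ) * ζ ^ (-j) by ring,
      show (Complex.I * (((x0.re : ℝ) : ℂ))⁻¹ * ζ ^ j + (0:ℂ) * 0)
        = Complex.I * (((x0.re : ℝ) : ℂ))⁻¹ * ζ ^ j by ring,
      show (Complex.I * (((x0.re : ℝ) : ℂ))⁻¹ * 0 + (0:ℂ) * ζ ^ (-j)) = 0 by ring,
      hccalc1, hccalc2]

lemma aux_back (k : ℕ) (hk : 3 ≤ k) (hodd : Odd k)
    (ζ : ℂ) (hζ : IsPrimitiveRoot ζ k)
    (ω : Matrix.SpecialLinearGroup (Fin 2) ℂ)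
    (hω : (↑ω : Matrix (Fin 2) (Fin 2) ℂ) = !![ζ, 0; 0, ζ⁻¹])
    (g : Matrix.SpecialLinearGroup (Fin 2) ℂ)
    (hex : ∃ h ∈ Subgroup.zpowers ω,
        (∃ a : ℂ, ‖a‖ = 1 ∧
          (↑g : Matrix (Fin 2) (Fin 2) ℂ)
            = !![a, 0; 0, a⁻¹] * (↑h : Matrix (Fin 2) (Fin 2) ℂ)) ∨
        (∃ x : ℝ, x ≠ 0 ∧
          (↑g : Matrix (Fin 2) (Fin 2) ℂ)
            = !![0, Complex.I * (x : ℂ); Complex.I * (x : ℂ)⁻¹, 0]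
                * (↑h : Matrix (Fin 2) (Fin 2) ℂ))) :
    Matrix.SpecialLinearGroup.map (starRingEnd ℂ) g * g ∈ Subgroup.zpowers ω := by
  have hζ0 : ζ ≠ 0 := hζ.ne_zero (by omega)
  have hζk : ζ ^ k = 1 := hζ.pow_eq_one
  have hnorm : ‖ζ‖ = 1 := Complex.norm_eq_one_of_pow_eq_one hζk (by omega)
  have hconjζ : ∀ j : ℤ, (starRingEnd ℂ) (ζ ^ j) = ζ ^ (-j) := by
    intro j
    rw [map_zpow₀, show (starRingEnd ℂ) ζ = ζ⁻¹ from (RCLike.inv_eq_conj hnorm).symm,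
      _root_.inv_zpow, ← _root_.zpow_neg]
  have hzadd : ∀ i j : ℤ, ζ ^ (i + j) = ζ ^ i * ζ ^ j := fun i j => zpow_add₀ hζ0 i j
  obtain ⟨h, hh, hcase⟩ := hex
  obtain ⟨m, hm⟩ := Subgroup.mem_zpowers_iff.mp hh
  have hhM : (↑h : Matrix (Fin 2) (Fin 2) ℂ) = !![ζ ^ m, 0; 0, ζ ^ (-m)] := by
    rw [← hm, aux_pow ζ ω hω m]
  rcases hcase with ⟨a, habs, hga⟩ | ⟨x, hx, hgx⟩
  · -- diagonal: σg * g = 1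
    have ha0 : a ≠ 0 := by
      intro h0; rw [h0] at habs; simp at habs
    have haa : (starRingEnd ℂ) a * a = 1 := by
      rw [mul_comm, Complex.mul_conj, Complex.normSq_eq_norm_sq, habs, one_pow, Complex.ofReal_one]
    have hgM : (↑g : Matrix (Fin 2) (Fin 2) ℂ) = !![a * ζ ^ m, 0; 0, a⁻¹ * ζ ^ (-m)] := by
      rw [hga, hhM, Matrix.mul_fin_two]
      ext i j
      fin_cases i <;> fin_cases j <;> simp
    have hone : Matrix.SpecialLinearGroup.map (starRingEnd ℂ) g * g = 1 := by
      apply Subtype.ext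
      rw [Matrix.SpecialLinearGroup.coe_mul, aux_sigma, hgM, aux_mapM, Matrix.mul_fin_two]
      show _ = (1 : Matrix (Fin 2) (Fin 2) ℂ)
      rw [Matrix.one_fin_two]
      have h00 : (starRingEnd ℂ) (a * ζ ^ m) * (a * ζ ^ m) + (starRingEnd ℂ) 0 * 0 = 1 := by
        rw [_root_.map_mul, hconjζ m, map_zero,
          show (starRingEnd ℂ) a * ζ ^ (-m) * (a * ζ ^ m) + 0 * 0
            = ((starRingEnd ℂ) a * a) * (ζ ^ (-m) * ζ ^ m) by ring,
          haa, ← hzadd, show (-m + m : ℤ) = 0 by ring, zpow_zero, mul_one]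
      have h11 : (starRingEnd ℂ) 0 * 0 + (starRingEnd ℂ) (a⁻¹ * ζ ^ (-m)) * (a⁻¹ * ζ ^ (-m)) = 1 := by
        rw [_root_.map_mul, hconjζ (-m), map_zero, map_inv₀, neg_neg,
          show (0:ℂ) * 0 + ((starRingEnd ℂ) a)⁻¹ * ζ ^ m * (a⁻¹ * ζ ^ (-m))
            = ((starRingEnd ℂ) a * a)⁻¹ * (ζ ^ m * ζ ^ (-m)) by ring,
          haa, ← hzadd, show (m + -m : ℤ) = 0 by ring, zpow_zero, inv_one, mul_one]
      rw [h00, h11]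
      norm_num
    rw [hone]
    exact Subgroup.one_mem _
  · -- antidiagonal: σg * g = ω ^ (2m)
    have hxC : ((x : ℝ) : ℂ) ≠ 0 := Complex.ofReal_ne_zero.mpr hx
    have hgM : (↑g : Matrix (Fin 2) (Fin 2) ℂ)
        = !![0, Complex.I * (x : ℂ) * ζ ^ (-m); Complex.I * ((x : ℂ))⁻¹ * ζ ^ m, 0] := by
      rw [hgx, hhM, Matrix.mul_fin_two]
      ext i j
      fin_cases i <;> fin_cases j <;> simp
    have homog : Matrix.SpecialLinearGroup.map (starRingEnd ℂ) g * g = ω ^ (2 * m) := by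
      apply Subtype.ext
      rw [Matrix.SpecialLinearGroup.coe_mul, aux_sigma, hgM, aux_mapM, Matrix.mul_fin_two,
        aux_pow ζ ω hω (2 * m)]
      have h00 : (starRingEnd ℂ) 0 * 0
          + (starRingEnd ℂ) (Complex.I * (x : ℂ) * ζ ^ (-m)) * (Complex.I * ((x : ℂ))⁻¹ * ζ ^ m)
          = ζ ^ (2 * m) := by
        rw [_root_.map_mul, _root_.map_mul, hconjζ (-m), Complex.conj_I, Complex.conj_ofReal,
          map_zero, neg_neg,
          show (0:ℂ) * 0 + -Complex.I * (x : ℂ) * ζ ^ m * (Complex.I * ((x : ℂ))⁻¹ * ζ ^ m)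
            = -(Complex.I * Complex.I) * ((x : ℂ) * ((x : ℂ))⁻¹) * (ζ ^ m * ζ ^ m) by ring,
          Complex.I_mul_I, mul_inv_cancel₀ hxC, ← hzadd, show (m + m : ℤ) = 2 * m by ring]
        ring
      have h11 : (starRingEnd ℂ) (Complex.I * ((x : ℂ))⁻¹ * ζ ^ m) * (Complex.I * (x : ℂ) * ζ ^ (-m))
          + (starRingEnd ℂ) 0 * 0 = ζ ^ (-(2 * m)) := by
        rw [_root_.map_mul, _root_.map_mul, hconjζ m, Complex.conj_I, map_inv₀,
          Complex.conj_ofReal, map_zero,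
          show -Complex.I * ((x : ℂ))⁻¹ * ζ ^ (-m) * (Complex.I * (x : ℂ) * ζ ^ (-m)) + (0:ℂ) * 0
            = -(Complex.I * Complex.I) * ((x : ℂ) * ((x : ℂ))⁻¹) * (ζ ^ (-m) * ζ ^ (-m)) by ring,
          Complex.I_mul_I, mul_inv_cancel₀ hxC, ← hzadd, show (-m + -m : ℤ) = -(2 * m) by ring]
        ring
      rw [h00, h11]
      simp only [map_zero, zero_mul, mul_zero, add_zero, zero_add]
    rw [homog]
    exact Subgroup.mem_zpowers_iff.mpr ⟨2 * m, rfl⟩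

/-- Let `k ≥ 3` be odd, `ζ` a primitive `k`-th root of unity,
`A_k = ⟨ω⟩` with `ω = diag(ζ, ζ⁻¹)`, and let `g` lie in the normalizer of `A_k` in `SL₂(ℂ)`.
Then `σ_s(g)·g ∈ A_k` iff there is `h ∈ A_k` such that either `g = diag(a, a⁻¹)·h` with
`|a| = 1`, or `g = !![0, i·x; i·x⁻¹, 0]·h` with `x ∈ ℝ`, `x ≠ 0`. -/
theorem statement6 (k : ℕ) (hk : 3 ≤ k) (hodd : Odd k)
    (ζ : ℂ) (hζ : IsPrimitiveRoot ζ k)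
    (ω : Matrix.SpecialLinearGroup (Fin 2) ℂ)
    (hω : (↑ω : Matrix (Fin 2) (Fin 2) ℂ) = !![ζ, 0; 0, ζ⁻¹])
    (g : Matrix.SpecialLinearGroup (Fin 2) ℂ)
    (hg : g ∈ Subgroup.normalizer (Subgroup.zpowers ω : Set (Matrix.SpecialLinearGroup (Fin 2) ℂ))) :
    Matrix.SpecialLinearGroup.map (starRingEnd ℂ) g * g ∈ Subgroup.zpowers ω ↔
      ∃ h ∈ Subgroup.zpowers ω,
        (∃ a : ℂ, ‖a‖ = 1 ∧
          (↑g : Matrix (Fin 2) (Fin 2) ℂ)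
            = !![a, 0; 0, a⁻¹] * (↑h : Matrix (Fin 2) (Fin 2) ℂ)) ∨
        (∃ x : ℝ, x ≠ 0 ∧
          (↑g : Matrix (Fin 2) (Fin 2) ℂ)
            = !![0, Complex.I * (x : ℂ); Complex.I * (x : ℂ)⁻¹, 0]
                * (↑h : Matrix (Fin 2) (Fin 2) ℂ)) := by
  constructor
  · exact aux_forward k hk hodd ζ hζ ω hω g (aux_dichot k hk ζ hζ ω hω g hg)
  · exact aux_back k hk hodd ζ hζ ω hω g
end

section
/- Let k ≥ 3 be an odd integer and let g be an element of the normalizer of A_k in SL₂(ℂ). Then σ_c(g)·g ∈ A_k if and only if there exist a nonzero x ∈ ℝ and h ∈ A_k such that g = diag(x, x⁻¹)·h. In particular no antidiagonal element g of the normalizer satisfies σ_c(g)·g ∈ A_k. (This computes, for k odd, the 1-cocycles Z¹(Gal(ℂ/ℝ), N/A_k) for the Galois action on N/A_k induced by σ_c, where N is the normalizer of A_k.) -/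
open Matrix Complex

private lemma statement7_pow_diag (z : ℂ) (n : ℕ) :
    (!![z,0;0,z⁻¹] : Matrix (Fin 2) (Fin 2) ℂ)^n = !![z^n,0;0,(z^n)⁻¹] := by
  induction n with
  | zero => simp [Matrix.one_fin_two]
  | succ n ih => rw [pow_succ, ih, Matrix.mul_fin_two, pow_succ, mul_inv]; simp

set_option maxHeartbeats 1000000 in
/-- Let `k ≥ 3` be odd, `ζ` a primitive `k`-th root of unity,
`A_k = ⟨ω⟩` with `ω = diag(ζ, ζ⁻¹)`, and let `g` lie in the normalizer of `A_k` in `SL₂(ℂ)`.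
Then `σ_c(g)·g ∈ A_k` iff `g = diag(x, x⁻¹)·h` for some nonzero real `x` and some `h ∈ A_k`.
In particular, no antidiagonal element `g` of the normalizer satisfies `σ_c(g)·g ∈ A_k`. -/
theorem statement7 (k : ℕ) (hk : 3 ≤ k) (hodd : Odd k)
    (ζ : ℂ) (hζ : IsPrimitiveRoot ζ k)
    (ω : Matrix.SpecialLinearGroup (Fin 2) ℂ)
    (hω : (↑ω : Matrix (Fin 2) (Fin 2) ℂ) = !![ζ, 0; 0, ζ⁻¹])
    (g : Matrix.SpecialLinearGroup (Fin 2) ℂ)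
    (hg : g ∈ Subgroup.normalizer (Subgroup.zpowers ω : Set (Matrix.SpecialLinearGroup (Fin 2) ℂ))) :
    ((∃ h ∈ Subgroup.zpowers ω,
        ((↑g : Matrix (Fin 2) (Fin 2) ℂ)ᴴ)⁻¹ * (↑g : Matrix (Fin 2) (Fin 2) ℂ)
          = (↑h : Matrix (Fin 2) (Fin 2) ℂ)) ↔
      ∃ h ∈ Subgroup.zpowers ω, ∃ x : ℝ, x ≠ 0 ∧
        (↑g : Matrix (Fin 2) (Fin 2) ℂ)
          = !![(x : ℂ), 0; 0, (x : ℂ)⁻¹] * (↑h : Matrix (Fin 2) (Fin 2) ℂ)) ∧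
    (∀ b : ℂ, (↑g : Matrix (Fin 2) (Fin 2) ℂ) = !![0, b; -b⁻¹, 0] →
      ¬ ∃ h ∈ Subgroup.zpowers ω,
          ((↑g : Matrix (Fin 2) (Fin 2) ℂ)ᴴ)⁻¹ * (↑g : Matrix (Fin 2) (Fin 2) ℂ)
            = (↑h : Matrix (Fin 2) (Fin 2) ℂ)) := by
  have hk0 : k ≠ 0 := by omega
  have hζk : ζ ^ k = 1 := hζ.pow_eq_one
  have hζ0 : ζ ≠ 0 := hζ.ne_zero (by omega)
  have hζabs : ‖ζ‖ = 1 := by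
    have h1 : ‖ζ‖ ^ k = 1 := by rw [← norm_pow, hζk, norm_one]
    rcases pow_eq_one_iff_cases.mp h1 with h | h | h
    · omega
    · exact h
    · nlinarith [norm_nonneg ζ]
  have hconjζ : starRingEnd ℂ ζ = ζ⁻¹ := (Complex.inv_eq_conj hζabs).symm
  -- coercion of natural powers of ω
  have hcoe : ∀ m : ℕ, (↑(ω^m) : Matrix (Fin 2) (Fin 2) ℂ) = !![ζ^m, 0; 0, (ζ^m)⁻¹] := by
    intro m
    rw [← statement7_pow_diag, ← hω]
    simp
  have hωk : ω ^ k = 1 := by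
    ext i j
    rw [hcoe]
    simp [hζk, Matrix.one_fin_two]
  -- every element of zpowers ω has the standard diagonal form
  have hmem : ∀ h ∈ Subgroup.zpowers ω, ∃ c : ℕ,
      (↑h : Matrix (Fin 2) (Fin 2) ℂ) = !![ζ^c, 0; 0, (ζ^c)⁻¹] := by
    intro h hh
    obtain ⟨n, rfl⟩ := Subgroup.mem_zpowers_iff.mp hh
    refine ⟨(n % k).toNat, ?_⟩
    have hn : ω ^ n = ω ^ ((n % k).toNat : ℤ) := by
      conv_lhs => rw [show n = k * (n / k) + n % k from (Int.mul_ediv_add_emod n k).symm]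
      rw [_root_.zpow_add, _root_.zpow_mul]
      have : (ω : Matrix.SpecialLinearGroup (Fin 2) ℂ) ^ (k : ℤ) = 1 := by
        rw [zpow_natCast, hωk]
      rw [this, _root_.one_zpow, one_mul,
        Int.toNat_of_nonneg (Int.emod_nonneg n (by exact_mod_cast hk0))]
    rw [hn, zpow_natCast, hcoe]
  -- membership of ω ^ m in zpowers
  have hpowmem : ∀ m : ℕ, ω ^ m ∈ Subgroup.zpowers ω := by
    intro m
    exact Subgroup.mem_zpowers_iff.mpr ⟨(m : ℤ), by rw [zpow_natCast]⟩
  -- no antidiagonal element works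
  have antid : ∀ b : ℂ, (↑g : Matrix (Fin 2) (Fin 2) ℂ) = !![0, b; -b⁻¹, 0] →
      ¬ ∃ h ∈ Subgroup.zpowers ω,
          ((↑g : Matrix (Fin 2) (Fin 2) ℂ)ᴴ)⁻¹ * (↑g : Matrix (Fin 2) (Fin 2) ℂ)
            = (↑h : Matrix (Fin 2) (Fin 2) ℂ) := by
    rintro b hgb ⟨h, hh, heq⟩
    obtain ⟨c, hc⟩ := hmem h hh
    rw [hc] at heq
    have hdet : b * b⁻¹ = 1 := by
      have := g.prop
      rw [hgb, Matrix.det_fin_two_of] at this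
      linear_combination this
    have hb : b ≠ 0 := by
      intro h; rw [h] at hdet; simp at hdet
    have hcb : starRingEnd ℂ b ≠ 0 := by simpa using hb
    have hH : (↑g : Matrix (Fin 2) (Fin 2) ℂ)ᴴ
        = !![0, -(starRingEnd ℂ b)⁻¹; starRingEnd ℂ b, 0] := by
      rw [hgb]; ext i j; fin_cases i <;> fin_cases j <;>
        simp [Matrix.conjTranspose_apply]
    have hHinv : ((↑g : Matrix (Fin 2) (Fin 2) ℂ)ᴴ)⁻¹
        = !![0, (starRingEnd ℂ b)⁻¹; -(starRingEnd ℂ b), 0] := by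
      apply Matrix.inv_eq_right_inv
      rw [hH, Matrix.mul_fin_two, Matrix.one_fin_two]
      field_simp
      simp
    rw [hHinv, hgb, Matrix.mul_fin_two] at heq
    have h00 : -((starRingEnd ℂ b)⁻¹ * b⁻¹) = ζ ^ c := by
      have := congrFun (congrFun heq 0) 0
      simpa using this
    have hzc : (ζ ^ c) ^ k = 1 := by rw [← pow_mul, mul_comm, pow_mul, hζk, one_pow]
    rw [← h00] at hzc
    have hns : starRingEnd ℂ b * b = (Complex.normSq b : ℂ) := by
      rw [mul_comm]; exact Complex.mul_conj b
    have hrw : -((starRingEnd ℂ b)⁻¹ * b⁻¹) = ((-(Complex.normSq b)⁻¹ : ℝ) : ℂ) := by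
      push_cast
      rw [← hns]
      field_simp
    rw [hrw, ← Complex.ofReal_pow] at hzc
    have hre : (-(Complex.normSq b)⁻¹ : ℝ) ^ k = 1 := by exact_mod_cast hzc
    have hpos : 0 < Complex.normSq b := Complex.normSq_pos.mpr hb
    have : (-(Complex.normSq b)⁻¹ : ℝ) ^ k < 0 := by
      apply Odd.pow_neg hodd
      simp [hpos]
    linarith
  -- classification of elements of the normalizer
  have classify : (∃ a : ℂ, (↑g : Matrix (Fin 2) (Fin 2) ℂ) = !![a, 0; 0, a⁻¹]) ∨
      (∃ b : ℂ, (↑g : Matrix (Fin 2) (Fin 2) ℂ) = !![0, b; -b⁻¹, 0]) := by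
    have hζ2 : ζ ≠ ζ⁻¹ := by
      intro h
      have h2 : ζ ^ 2 = 1 := by
        field_simp at h
        linear_combination h
      have h3 := hζ.dvd_of_pow_eq_one 2 h2
      have := Nat.le_of_dvd (by norm_num) h3
      omega
    have hconj : g * ω * g⁻¹ ∈ Subgroup.zpowers ω :=
      (Subgroup.mem_normalizer_iff.mp hg ω).mp (Subgroup.mem_zpowers ω)
    obtain ⟨c, hc⟩ := hmem _ hconj
    have hgrp : g * ω = (g * ω * g⁻¹) * g := by group
    have hE : (↑g : Matrix (Fin 2) (Fin 2) ℂ) * !![ζ, 0; 0, ζ⁻¹]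
        = !![ζ^c, 0; 0, (ζ^c)⁻¹] * (↑g : Matrix (Fin 2) (Fin 2) ℂ) := by
      rw [← hω, ← hc, ← Matrix.SpecialLinearGroup.coe_mul, ← Matrix.SpecialLinearGroup.coe_mul,
        ← hgrp]
    set G := (↑g : Matrix (Fin 2) (Fin 2) ℂ) with hG
    have e00 : G 0 0 * ζ = ζ^c * G 0 0 := by
      have := congrFun (congrFun hE 0) 0
      simpa [Matrix.mul_apply, Fin.sum_univ_two] using this
    have e01 : G 0 1 * ζ⁻¹ = ζ^c * G 0 1 := by
      have := congrFun (congrFun hE 0) 1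
      simpa [Matrix.mul_apply, Fin.sum_univ_two] using this
    have e10 : G 1 0 * ζ = (ζ^c)⁻¹ * G 1 0 := by
      have := congrFun (congrFun hE 1) 0
      simpa [Matrix.mul_apply, Fin.sum_univ_two] using this
    have e11 : G 1 1 * ζ⁻¹ = (ζ^c)⁻¹ * G 1 1 := by
      have := congrFun (congrFun hE 1) 1
      simpa [Matrix.mul_apply, Fin.sum_univ_two] using this
    have hdet : G 0 0 * G 1 1 - G 0 1 * G 1 0 = 1 := by
      rw [← Matrix.det_fin_two]
      exact g.prop
    by_cases h00 : G 0 0 = 0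
    · right
      have h01 : G 0 1 ≠ 0 := by
        intro h; rw [h00, h] at hdet; simp at hdet
      have hzc : ζ^c = ζ⁻¹ := by
        have h2 : ζ⁻¹ * G 0 1 = ζ^c * G 0 1 := by linear_combination e01
        exact (mul_right_cancel₀ h01 h2).symm
      have h11 : G 1 1 = 0 := by
        rw [hzc, inv_inv] at e11
        have h2 : (ζ⁻¹ - ζ) * G 1 1 = 0 := by linear_combination e11
        rcases mul_eq_zero.mp h2 with h | h
        · exact absurd (sub_eq_zero.mp h).symm hζ2
        · exact h
      have h10 : G 1 0 = -(G 0 1)⁻¹ := by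
        rw [h00, h11] at hdet
        field_simp at hdet ⊢
        linear_combination -hdet
      refine ⟨G 0 1, ?_⟩
      ext i j
      fin_cases i <;> fin_cases j <;> simp [h00, h11, h10]
    · left
      have hzc : ζ^c = ζ := by
        have h2 : ζ^c * G 0 0 = ζ * G 0 0 := by linear_combination -e00
        exact mul_right_cancel₀ h00 h2
      have h01 : G 0 1 = 0 := by
        rw [hzc] at e01
        have h2 : (ζ⁻¹ - ζ) * G 0 1 = 0 := by linear_combination e01
        rcases mul_eq_zero.mp h2 with h | h
        · exact absurd (sub_eq_zero.mp h).symm hζ2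
        · exact h
      have h10 : G 1 0 = 0 := by
        rw [hzc] at e10
        have h2 : (ζ - ζ⁻¹) * G 1 0 = 0 := by linear_combination e10
        rcases mul_eq_zero.mp h2 with h | h
        · exact absurd (sub_eq_zero.mp h) hζ2
        · exact h
      have h11 : G 1 1 = (G 0 0)⁻¹ := by
        rw [h01, h10] at hdet
        field_simp at hdet ⊢
        linear_combination hdet
      refine ⟨G 0 0, ?_⟩
      ext i j
      fin_cases i <;> fin_cases j <;> simp [h01, h10, h11]
  constructor
  · constructor
    · -- forward direction
      rintro ⟨h, hh, heq⟩
      rcases classify with ⟨a, hga⟩ | ⟨b, hgb⟩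
      · obtain ⟨c, hc⟩ := hmem h hh
        rw [hc] at heq
        have ha : a ≠ 0 := by
          intro h'
          have := g.prop
          rw [hga, Matrix.det_fin_two_of, h'] at this
          simp at this
        have hca : starRingEnd ℂ a ≠ 0 := by simpa using ha
        have hH : (↑g : Matrix (Fin 2) (Fin 2) ℂ)ᴴ
            = !![starRingEnd ℂ a, 0; 0, (starRingEnd ℂ a)⁻¹] := by
          rw [hga]; ext i j; fin_cases i <;> fin_cases j <;> simp [Matrix.conjTranspose_apply]
        have hHinv : ((↑g : Matrix (Fin 2) (Fin 2) ℂ)ᴴ)⁻¹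
            = !![(starRingEnd ℂ a)⁻¹, 0; 0, starRingEnd ℂ a] := by
          apply Matrix.inv_eq_right_inv
          rw [hH, Matrix.mul_fin_two, Matrix.one_fin_two]
          field_simp
          simp
        rw [hHinv, hga, Matrix.mul_fin_two] at heq
        have h00 : (starRingEnd ℂ a)⁻¹ * a = ζ ^ c := by
          have := congrFun (congrFun heq 0) 0
          simpa using this
        obtain ⟨t, ht⟩ : ∃ t : ℕ, k = 2 * t + 1 := hodd
        set m := c * (t + 1) with hm
        have hsq : ζ ^ m * ζ ^ m = ζ ^ c := by
          rw [← pow_add]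
          have : m + m = k * c + c := by rw [hm, ht]; ring
          rw [this, pow_add, pow_mul, hζk, one_pow, one_mul]
        set xc := a * (ζ ^ m)⁻¹ with hxc
        have hζm0 : ζ ^ m ≠ 0 := pow_ne_zero _ hζ0
        have hxc0 : xc ≠ 0 := mul_ne_zero ha (inv_ne_zero hζm0)
        have hconjm : starRingEnd ℂ (ζ ^ m) = (ζ ^ m)⁻¹ := by
          rw [_root_.map_pow, hconjζ, inv_pow]
        have hreal : starRingEnd ℂ xc = xc := by
          rw [hxc, _root_.map_mul, map_inv₀, hconjm, inv_inv]
          have hac : a = starRingEnd ℂ a * ζ ^ c := by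
            field_simp at h00
            linear_combination h00
          rw [← hsq] at hac
          have hinv : ζ ^ m * (ζ ^ m)⁻¹ = 1 := mul_inv_cancel₀ hζm0
          linear_combination (-(ζ ^ m)⁻¹) * hac - (starRingEnd ℂ a * ζ ^ m) * hinv
        obtain ⟨x, hx⟩ : ∃ x : ℝ, (x : ℂ) = xc := ⟨xc.re, Complex.conj_eq_iff_re.mp hreal⟩
        refine ⟨ω ^ m, hpowmem m, x, ?_, ?_⟩
        · intro h'; rw [h'] at hx; exact hxc0 (by exact_mod_cast hx.symm)
        · rw [hcoe, hga, Matrix.mul_fin_two]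
          ext i j
          fin_cases i <;> fin_cases j <;> simp [hx, hxc] <;> field_simp
      · exact (antid b hgb ⟨h, hh, heq⟩).elim
    · -- backward direction
      rintro ⟨h, hh, x, hx, hgx⟩
      obtain ⟨c, hc⟩ := hmem h hh
      rw [hc] at hgx
      refine ⟨ω ^ (2 * c), hpowmem _, ?_⟩
      rw [hcoe]
      have hx0 : (x : ℂ) ≠ 0 := by exact_mod_cast hx
      have hζc : ζ ^ c ≠ 0 := pow_ne_zero _ hζ0
      have hg' : (↑g : Matrix (Fin 2) (Fin 2) ℂ)
          = !![(x:ℂ) * ζ^c, 0; 0, (x:ℂ)⁻¹ * (ζ^c)⁻¹] := by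
        rw [hgx, Matrix.mul_fin_two]; norm_num
      have hH : (↑g : Matrix (Fin 2) (Fin 2) ℂ)ᴴ
          = !![(x:ℂ) * (ζ^c)⁻¹, 0; 0, (x:ℂ)⁻¹ * ζ^c] := by
        rw [hg']; ext i j; fin_cases i <;> fin_cases j <;>
          simp [Matrix.conjTranspose_apply, hconjζ, inv_pow, Complex.conj_ofReal]
      have hHinv : ((↑g : Matrix (Fin 2) (Fin 2) ℂ)ᴴ)⁻¹
          = !![(x:ℂ)⁻¹ * ζ^c, 0; 0, (x:ℂ) * (ζ^c)⁻¹] := by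
        apply Matrix.inv_eq_right_inv
        rw [hH, Matrix.mul_fin_two, Matrix.one_fin_two]
        field_simp
        simp
      rw [hHinv, hg', Matrix.mul_fin_two]
      ext i j
      fin_cases i <;> fin_cases j <;> field_simp <;> ring
  · exact antid
end

section
/- Let k ≥ 4 be an even integer, let ζ_k be a primitive k-th root of unity in ℂ, and let ζ_{2k} be a primitive 2k-th root of unity with ζ_{2k}² = ζ_k. Let g be an element of the normalizer of A_k in SL₂(ℂ). Then σ_s(g)·g ∈ A_k if and only if there exists h ∈ A_k such that one of the following holds: (1) g = diag(a, a⁻¹)·h for some a ∈ ℂ with |a| = 1; (2) g = m(x)·h for some nonzero x ∈ ℝ, where m(x) has rows (0, i·x) and (i·x⁻¹, 0); (3) g = m'(x)·h for some nonzero x ∈ ℝ, where m'(x) has rows (0, i·x·ζ_{2k}) and (i·x⁻¹·ζ_{2k}⁻¹, 0). (This computes, for k even, the 1-cocycles Z¹(Gal(ℂ/ℝ), N/A_k) for the Galois action induced by σ_s, where N is the normalizer of A_k.) -/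
open Matrix Complex

lemma stmt8_coe_mul (A B : Matrix.SpecialLinearGroup (Fin 2) ℂ) :
    (↑(A * B) : Matrix (Fin 2) (Fin 2) ℂ) = (↑A : Matrix (Fin 2) (Fin 2) ℂ) * (↑B : Matrix (Fin 2) (Fin 2) ℂ) :=
  Matrix.SpecialLinearGroup.coe_mul A B

lemma stmt8_coe_inv (A : Matrix.SpecialLinearGroup (Fin 2) ℂ) :
    (↑(A⁻¹) : Matrix (Fin 2) (Fin 2) ℂ) = adjugate (↑A : Matrix (Fin 2) (Fin 2) ℂ) :=
  Matrix.SpecialLinearGroup.coe_inv A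

lemma stmt8_coe_zpow (ζ : ℂ) (hz : ζ ≠ 0) (ω : Matrix.SpecialLinearGroup (Fin 2) ℂ)
    (hω : (↑ω : Matrix (Fin 2) (Fin 2) ℂ) = !![ζ, 0; 0, ζ⁻¹]) (j : ℤ) :
    (↑(ω ^ j) : Matrix (Fin 2) (Fin 2) ℂ) = !![ζ ^ j, 0; 0, ζ ^ (-j)] := by
  have hinv : (↑(ω⁻¹) : Matrix (Fin 2) (Fin 2) ℂ) = !![ζ⁻¹, 0; 0, ζ] := by
    rw [stmt8_coe_inv]
    rw [hω, Matrix.adjugate_fin_two]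
    norm_num
  induction j using Int.induction_on with
  | zero => simp [Matrix.one_fin_two]
  | succ n ih =>
      rw [_root_.zpow_add, zpow_one]
      rw [stmt8_coe_mul]
      rw [ih, hω, Matrix.mul_fin_two]
      have e1 : ζ ^ ((n:ℤ)+1) = ζ ^ (n:ℤ) * ζ := by rw [zpow_add_one₀ hz]
      have e2 : ζ ^ (-((n:ℤ)+1)) = ζ ^ (-(n:ℤ)) * ζ⁻¹ := by
        rw [neg_add, zpow_add₀ hz, _root_.zpow_neg_one]
      rw [e1, e2]
      norm_num
  | pred n ih =>
      rw [_root_.zpow_sub, zpow_one]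
      rw [stmt8_coe_mul]
      rw [ih, hinv, Matrix.mul_fin_two]
      have e1 : ζ ^ (-(n:ℤ)-1) = ζ ^ (-(n:ℤ)) * ζ⁻¹ := by
        rw [sub_eq_add_neg, zpow_add₀ hz, _root_.zpow_neg_one]
      simp only [neg_neg]
      have e2 : ζ ^ (-(-(n:ℤ)-1)) = ζ ^ (n:ℤ) * ζ := by
        rw [neg_sub, sub_neg_eq_add, add_comm, zpow_add₀ hz, zpow_one]
      rw [e1, e2]
      norm_num

/-- Let `k ≥ 4` be even, `ζ` a primitive `k`-th root of unity, `ζ₂` a primitive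
`2k`-th root of unity with `ζ₂² = ζ`, `A_k = ⟨ω⟩` with `ω = diag(ζ, ζ⁻¹)`, and let `g` lie in
the normalizer of `A_k` in `SL₂(ℂ)`. Then `σ_s(g)·g ∈ A_k` iff there is `h ∈ A_k` with
(1) `g = diag(a, a⁻¹)·h`, `|a| = 1`; or (2) `g = !![0, i·x; i·x⁻¹, 0]·h`, `x ∈ ℝ*`; or
(3) `g = !![0, i·x·ζ₂; i·x⁻¹·ζ₂⁻¹, 0]·h`, `x ∈ ℝ*`. -/
theorem statement8 (k : ℕ) (hk : 4 ≤ k) (hev : Even k)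
    (ζ ζ₂ : ℂ) (hζ : IsPrimitiveRoot ζ k) (hζ₂ : IsPrimitiveRoot ζ₂ (2 * k))
    (hsq : ζ₂ ^ 2 = ζ)
    (ω : Matrix.SpecialLinearGroup (Fin 2) ℂ)
    (hω : (↑ω : Matrix (Fin 2) (Fin 2) ℂ) = !![ζ, 0; 0, ζ⁻¹])
    (g : Matrix.SpecialLinearGroup (Fin 2) ℂ)
    (hg : g ∈ Subgroup.normalizer (Subgroup.zpowers ω : Set (Matrix.SpecialLinearGroup (Fin 2) ℂ))) :
    Matrix.SpecialLinearGroup.map (starRingEnd ℂ) g * g ∈ Subgroup.zpowers ω ↔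
      ∃ h ∈ Subgroup.zpowers ω,
        (∃ a : ℂ, ‖a‖ = 1 ∧
          (↑g : Matrix (Fin 2) (Fin 2) ℂ)
            = !![a, 0; 0, a⁻¹] * (↑h : Matrix (Fin 2) (Fin 2) ℂ)) ∨
        (∃ x : ℝ, x ≠ 0 ∧
          (↑g : Matrix (Fin 2) (Fin 2) ℂ)
            = !![0, Complex.I * (x : ℂ); Complex.I * (x : ℂ)⁻¹, 0]
                * (↑h : Matrix (Fin 2) (Fin 2) ℂ)) ∨
        (∃ x : ℝ, x ≠ 0 ∧
          (↑g : Matrix (Fin 2) (Fin 2) ℂ)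
            = !![0, Complex.I * (x : ℂ) * ζ₂; Complex.I * (x : ℂ)⁻¹ * ζ₂⁻¹, 0]
                * (↑h : Matrix (Fin 2) (Fin 2) ℂ)) := by
  -- basic scalar facts
  have hk0 : k ≠ 0 := by omega
  have hζ0 : ζ ≠ 0 := hζ.ne_zero hk0
  have hζ₂0 : ζ₂ ≠ 0 := hζ₂.ne_zero (by omega)
  have hnζ : ‖ζ‖ = 1 := Complex.norm_eq_one_of_pow_eq_one hζ.pow_eq_one hk0
  have hnζ₂ : ‖ζ₂‖ = 1 := Complex.norm_eq_one_of_pow_eq_one hζ₂.pow_eq_one (by omega)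
  have hconjζ : (starRingEnd ℂ) ζ = ζ⁻¹ := (RCLike.inv_eq_conj hnζ).symm
  have hconjζ₂ : (starRingEnd ℂ) ζ₂ = ζ₂⁻¹ := (RCLike.inv_eq_conj hnζ₂).symm
  have hconjz : ∀ j : ℤ, (starRingEnd ℂ) (ζ ^ j) = ζ ^ (-j) := by
    intro j
    rw [map_zpow₀, hconjζ, _root_.inv_zpow, ← _root_.zpow_neg]
  have hz2 : ζ₂ ^ (2:ℤ) = ζ := by
    rw [show (2:ℤ) = ((2:ℕ):ℤ) by norm_num, zpow_natCast, hsq]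
  have hζζne : ζ * ζ ≠ 1 := by
    have := hζ.pow_ne_one_of_pos_of_lt (l := 2) (by norm_num) (by omega)
    rwa [sq] at this
  have hζne : ζ ≠ ζ⁻¹ := by
    intro h
    apply hζζne
    nth_rewrite 2 [h]
    exact mul_inv_cancel₀ hζ0
  have hdet : (↑g : Matrix (Fin 2) (Fin 2) ℂ) 0 0 * (↑g : Matrix (Fin 2) (Fin 2) ℂ) 1 1
      - (↑g : Matrix (Fin 2) (Fin 2) ℂ) 0 1 * (↑g : Matrix (Fin 2) (Fin 2) ℂ) 1 0 = 1 := by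
    have := g.prop
    rwa [Matrix.det_fin_two] at this
  -- the backward direction
  have hbw : (∃ h ∈ Subgroup.zpowers ω,
        (∃ a : ℂ, ‖a‖ = 1 ∧
          (↑g : Matrix (Fin 2) (Fin 2) ℂ)
            = !![a, 0; 0, a⁻¹] * (↑h : Matrix (Fin 2) (Fin 2) ℂ)) ∨
        (∃ x : ℝ, x ≠ 0 ∧
          (↑g : Matrix (Fin 2) (Fin 2) ℂ)
            = !![0, Complex.I * (x : ℂ); Complex.I * (x : ℂ)⁻¹, 0]
                * (↑h : Matrix (Fin 2) (Fin 2) ℂ)) ∨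
        (∃ x : ℝ, x ≠ 0 ∧
          (↑g : Matrix (Fin 2) (Fin 2) ℂ)
            = !![0, Complex.I * (x : ℂ) * ζ₂; Complex.I * (x : ℂ)⁻¹ * ζ₂⁻¹, 0]
                * (↑h : Matrix (Fin 2) (Fin 2) ℂ))) →
      Matrix.SpecialLinearGroup.map (starRingEnd ℂ) g * g ∈ Subgroup.zpowers ω := by
    rintro ⟨h, hh, hcase⟩
    obtain ⟨n, hn⟩ := Subgroup.mem_zpowers_iff.mp hh
    have hhm : (↑h : Matrix (Fin 2) (Fin 2) ℂ) = !![ζ ^ n, 0; 0, ζ ^ (-n)] := by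
      rw [← hn, stmt8_coe_zpow ζ hζ0 ω hω n]
    have hKco : (↑(Matrix.SpecialLinearGroup.map (starRingEnd ℂ) g) : Matrix (Fin 2) (Fin 2) ℂ)
        = ((↑g : Matrix (Fin 2) (Fin 2) ℂ).map (starRingEnd ℂ)) := by
      rw [SpecialLinearGroup.map_apply_coe, RingHom.mapMatrix_apply]
    rcases hcase with ⟨a, ha, hge⟩ | ⟨x, hx, hge⟩ | ⟨x, hx, hge⟩
    · -- diagonal form
      have ha0 : a ≠ 0 := by
        intro h0
        rw [h0] at ha
        simp at ha
      have hca : (starRingEnd ℂ) a = a⁻¹ :=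
        (RCLike.inv_eq_conj (by exact ha)).symm
      have hge' : (↑g : Matrix (Fin 2) (Fin 2) ℂ) = !![a * ζ ^ n, 0; 0, a⁻¹ * ζ ^ (-n)] := by
        rw [hge, hhm, Matrix.mul_fin_two]
        norm_num
      refine Subgroup.mem_zpowers_iff.mpr ⟨0, ?_⟩
      symm
      apply Subtype.coe_injective
      show (↑(Matrix.SpecialLinearGroup.map (starRingEnd ℂ) g * g) : Matrix (Fin 2) (Fin 2) ℂ)
        = (↑(ω ^ 0) : Matrix (Fin 2) (Fin 2) ℂ)
      rw [stmt8_coe_mul]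
      rw [hKco, hge', stmt8_coe_zpow ζ hζ0 ω hω 0]
      ext i j
      fin_cases i <;> fin_cases j <;>
        simp [Matrix.mul_apply, Fin.sum_univ_two, Matrix.map_apply, _root_.map_mul,
          map_inv₀, Complex.conj_I, Complex.conj_ofReal, hconjz, hca, neg_neg]
      all_goals field_simp [ha0, zpow_ne_zero n hζ0]
    · -- antidiagonal form (2)
      have hxC : ((x : ℝ) : ℂ) ≠ 0 := Complex.ofReal_ne_zero.mpr hx
      have hge' : (↑g : Matrix (Fin 2) (Fin 2) ℂ)
          = !![0, Complex.I * (x : ℂ) * ζ ^ (-n); Complex.I * ((x : ℝ) : ℂ)⁻¹ * ζ ^ n, 0] := by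
        rw [hge, hhm, Matrix.mul_fin_two]
        norm_num
      refine Subgroup.mem_zpowers_iff.mpr ⟨2 * n, ?_⟩
      symm
      apply Subtype.coe_injective
      show (↑(Matrix.SpecialLinearGroup.map (starRingEnd ℂ) g * g) : Matrix (Fin 2) (Fin 2) ℂ)
        = (↑(ω ^ (2 * n)) : Matrix (Fin 2) (Fin 2) ℂ)
      rw [stmt8_coe_mul]
      rw [hKco, hge', stmt8_coe_zpow ζ hζ0 ω hω (2 * n)]
      ext i j
      fin_cases i <;> fin_cases j <;>
        simp [Matrix.mul_apply, Fin.sum_univ_two, Matrix.map_apply, _root_.map_mul,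
          map_inv₀, Complex.conj_I, Complex.conj_ofReal, hconjz, neg_neg]
      · -- entry (0,0)
        have hxx' : ((x : ℝ) : ℂ) * ((x : ℝ) : ℂ)⁻¹ = 1 := mul_inv_cancel₀ hxC
        have hz2a : ζ ^ n * ζ ^ n = ζ ^ (2 * n) := by
          rw [← zpow_add₀ hζ0]
          congr 1
          ring
        linear_combination (-(((x : ℝ) : ℂ) * ((x : ℝ) : ℂ)⁻¹) * (ζ ^ n * ζ ^ n))
            * Complex.I_sq + (ζ ^ n * ζ ^ n) * hxx' + hz2a
      · -- entry (1,1)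
        have hxx : ((x : ℝ) : ℂ)⁻¹ * ((x : ℝ) : ℂ) = 1 := inv_mul_cancel₀ hxC
        rw [← _root_.zpow_neg, ← _root_.zpow_neg]
        have hz2' : ζ ^ (-n) * ζ ^ (-n) = ζ ^ (-(2 * n)) := by
          rw [← zpow_add₀ hζ0]
          congr 1
          ring
        linear_combination (-(((x : ℝ) : ℂ)⁻¹ * ((x : ℝ) : ℂ)) * (ζ ^ (-n) * ζ ^ (-n)))
            * Complex.I_sq + (ζ ^ (-n) * ζ ^ (-n)) * hxx + hz2'
    · -- antidiagonal form (3)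
      have hxC : ((x : ℝ) : ℂ) ≠ 0 := Complex.ofReal_ne_zero.mpr hx
      have hge' : (↑g : Matrix (Fin 2) (Fin 2) ℂ)
          = !![0, Complex.I * (x : ℂ) * ζ₂ * ζ ^ (-n);
              Complex.I * ((x : ℝ) : ℂ)⁻¹ * ζ₂⁻¹ * ζ ^ n, 0] := by
        rw [hge, hhm, Matrix.mul_fin_two]
        norm_num
      refine Subgroup.mem_zpowers_iff.mpr ⟨2 * n - 1, ?_⟩
      symm
      apply Subtype.coe_injective
      show (↑(Matrix.SpecialLinearGroup.map (starRingEnd ℂ) g * g) : Matrix (Fin 2) (Fin 2) ℂ)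
        = (↑(ω ^ (2 * n - 1)) : Matrix (Fin 2) (Fin 2) ℂ)
      rw [stmt8_coe_mul]
      rw [hKco, hge', stmt8_coe_zpow ζ hζ0 ω hω (2 * n - 1)]
      ext i j
      fin_cases i <;> fin_cases j <;>
        simp [Matrix.mul_apply, Fin.sum_univ_two, Matrix.map_apply, _root_.map_mul,
          map_inv₀, Complex.conj_I, Complex.conj_ofReal, hconjz, hconjζ₂, neg_neg]
      · -- entry (0,0)
        have hxx' : ((x : ℝ) : ℂ) * ((x : ℝ) : ℂ)⁻¹ = 1 := mul_inv_cancel₀ hxC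
        have h2i : ζ₂⁻¹ * ζ₂⁻¹ = ζ⁻¹ := by
          rw [← mul_inv]
          congr 1
          linear_combination hsq
        have hz2b : ζ⁻¹ * (ζ ^ n * ζ ^ n) = ζ ^ (2 * n - 1) := by
          rw [show ζ⁻¹ * (ζ ^ n * ζ ^ n) = ζ ^ (-1 : ℤ) * ζ ^ n * ζ ^ n by
            rw [_root_.zpow_neg_one]; ring, ← zpow_add₀ hζ0, ← zpow_add₀ hζ0]
          congr 1
          ring
        linear_combination
          (-(((x : ℝ) : ℂ) * ((x : ℝ) : ℂ)⁻¹) * (ζ₂⁻¹ * ζ₂⁻¹) * (ζ ^ n * ζ ^ n))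
            * Complex.I_sq + ((ζ₂⁻¹ * ζ₂⁻¹) * (ζ ^ n * ζ ^ n)) * hxx'
            + (ζ ^ n * ζ ^ n) * h2i + hz2b
      · -- entry (1,1)
        have hxx : ((x : ℝ) : ℂ)⁻¹ * ((x : ℝ) : ℂ) = 1 := inv_mul_cancel₀ hxC
        rw [← _root_.zpow_neg]
        have hz1 : ζ * (ζ ^ (-n) * ζ ^ (-n)) = ζ ^ (1 - 2 * n) := by
          rw [show ζ * (ζ ^ (-n) * ζ ^ (-n)) = ζ ^ (1:ℤ) * ζ ^ (-n) * ζ ^ (-n) by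
            rw [zpow_one]; ring, ← zpow_add₀ hζ0, ← zpow_add₀ hζ0]
          congr 1
          ring
        linear_combination
          (-(((x : ℝ) : ℂ)⁻¹ * ((x : ℝ) : ℂ)) * (ζ₂ * ζ₂) * (ζ ^ (-n) * ζ ^ (-n)))
            * Complex.I_sq + ((ζ₂ * ζ₂) * (ζ ^ (-n) * ζ ^ (-n))) * hxx
            + (ζ ^ (-n) * ζ ^ (-n)) * hsq + hz1
  refine ⟨?_, hbw⟩
  intro hmem
  obtain ⟨j, hj⟩ := Subgroup.mem_zpowers_iff.mp hmem
  have hKco : (↑(Matrix.SpecialLinearGroup.map (starRingEnd ℂ) g) : Matrix (Fin 2) (Fin 2) ℂ)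
      = ((↑g : Matrix (Fin 2) (Fin 2) ℂ).map (starRingEnd ℂ)) := by
    rw [SpecialLinearGroup.map_apply_coe, RingHom.mapMatrix_apply]
  have hjm : !![ζ ^ j, 0; 0, ζ ^ (-j)]
      = ((↑g : Matrix (Fin 2) (Fin 2) ℂ).map (starRingEnd ℂ)) * (↑g : Matrix (Fin 2) (Fin 2) ℂ) := by
    rw [← stmt8_coe_zpow ζ hζ0 ω hω j, hj]
    rw [stmt8_coe_mul]
    rw [hKco]
  -- normalizer gives the shape of g
  rw [Subgroup.mem_normalizer_iff] at hg
  obtain ⟨m, hm⟩ := Subgroup.mem_zpowers_iff.mp ((hg ω).mp (Subgroup.mem_zpowers ω))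
  have hgω : g * ω = ω ^ m * g := by rw [hm]; group
  have hmat : (↑g : Matrix (Fin 2) (Fin 2) ℂ) * !![ζ, 0; 0, ζ⁻¹]
      = !![ζ ^ m, 0; 0, ζ ^ (-m)] * (↑g : Matrix (Fin 2) (Fin 2) ℂ) := by
    have := congrArg (fun A : Matrix.SpecialLinearGroup (Fin 2) ℂ =>
      (↑A : Matrix (Fin 2) (Fin 2) ℂ)) hgω
    simpa [SpecialLinearGroup.coe_mul, hω, stmt8_coe_zpow ζ hζ0 ω hω m] using this
  have h00 := congrFun (congrFun hmat 0) 0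
  have h01 := congrFun (congrFun hmat 0) 1
  have h10 := congrFun (congrFun hmat 1) 0
  have h11 := congrFun (congrFun hmat 1) 1
  simp [Matrix.mul_apply, Fin.sum_univ_two] at h00 h01 h10 h11
  have habsζ : ‖ζ‖ = 1 := by exact hnζ
  have hdi : ζ ^ m = ζ ∨ ζ ^ m = ζ⁻¹ := by
    by_cases hp : (↑g : Matrix (Fin 2) (Fin 2) ℂ) 0 0 = 0
    · right
      have hq : (↑g : Matrix (Fin 2) (Fin 2) ℂ) 0 1 ≠ 0 := by
        intro h0
        rw [hp, h0] at hdet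
        simp at hdet
      have h' : (↑g : Matrix (Fin 2) (Fin 2) ℂ) 0 1 * ζ⁻¹
          = (↑g : Matrix (Fin 2) (Fin 2) ℂ) 0 1 * ζ ^ m := by rw [h01]; ring
      exact (mul_left_cancel₀ hq h').symm
    · left
      have h' : (↑g : Matrix (Fin 2) (Fin 2) ℂ) 0 0 * ζ
          = (↑g : Matrix (Fin 2) (Fin 2) ℂ) 0 0 * ζ ^ m := by rw [h00]; ring
      exact (mul_left_cancel₀ hp h').symm
  rcases hdi with hA | hB
  · -- diagonal case
    rw [hA] at h01 h10
    have hq0 : (↑g : Matrix (Fin 2) (Fin 2) ℂ) 0 1 = 0 := by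
      by_contra hq
      refine hζne ?_
      have h' : (↑g : Matrix (Fin 2) (Fin 2) ℂ) 0 1 * ζ⁻¹
          = (↑g : Matrix (Fin 2) (Fin 2) ℂ) 0 1 * ζ := by rw [h01]; ring
      exact (mul_left_cancel₀ hq h').symm
    have hr0 : (↑g : Matrix (Fin 2) (Fin 2) ℂ) 1 0 = 0 := by
      by_contra hr
      refine hζne ?_
      have h' : (↑g : Matrix (Fin 2) (Fin 2) ℂ) 1 0 * ζ
          = (↑g : Matrix (Fin 2) (Fin 2) ℂ) 1 0 * ζ⁻¹ := by rw [h10]; ring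
      exact mul_left_cancel₀ hr h'
    rw [hq0] at hdet
    simp only [zero_mul, mul_zero, sub_zero] at hdet
    have hp0 : (↑g : Matrix (Fin 2) (Fin 2) ℂ) 0 0 ≠ 0 := left_ne_zero_of_mul_eq_one hdet
    have hs : (↑g : Matrix (Fin 2) (Fin 2) ℂ) 1 1 = ((↑g : Matrix (Fin 2) (Fin 2) ℂ) 0 0)⁻¹ :=
      eq_inv_of_mul_eq_one_left (by rw [mul_comm]; exact hdet)
    have hG : (↑g : Matrix (Fin 2) (Fin 2) ℂ)
        = !![(↑g : Matrix (Fin 2) (Fin 2) ℂ) 0 0, 0; 0, ((↑g : Matrix (Fin 2) (Fin 2) ℂ) 0 0)⁻¹] := by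
      conv_lhs => rw [Matrix.eta_fin_two (↑g : Matrix (Fin 2) (Fin 2) ℂ)]
      rw [hq0, hr0, hs]
    rw [hG] at hjm
    have h00j := congrFun (congrFun hjm 0) 0
    simp [Matrix.mul_apply, Fin.sum_univ_two, Matrix.map_apply] at h00j
    have habs : ‖(↑g : Matrix (Fin 2) (Fin 2) ℂ) 0 0‖ = 1 := by
      have h1 := congrArg (‖·‖) h00j
      simp [_root_.map_mul, map_zpow₀, habsζ, Complex.norm_conj] at h1
      rcases mul_self_eq_one_iff.mp h1.symm with h2 | h2
      · exact h2
      · exfalso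
        have := norm_nonneg ((↑g : Matrix (Fin 2) (Fin 2) ℂ) 0 0)
        rw [h2] at this
        linarith
    exact ⟨1, Subgroup.one_mem _, Or.inl ⟨(↑g : Matrix (Fin 2) (Fin 2) ℂ) 0 0, habs, by
      rw [show (↑(1 : Matrix.SpecialLinearGroup (Fin 2) ℂ) : Matrix (Fin 2) (Fin 2) ℂ) = 1 from
        Matrix.SpecialLinearGroup.coe_one, mul_one]; exact hG⟩⟩
  · -- antidiagonal case
    rw [hB] at h00
    simp only [hB, inv_inv] at h11
    have hP0 : (↑g : Matrix (Fin 2) (Fin 2) ℂ) 0 0 = 0 := by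
      by_contra hp
      refine hζne ?_
      have h' : (↑g : Matrix (Fin 2) (Fin 2) ℂ) 0 0 * ζ
          = (↑g : Matrix (Fin 2) (Fin 2) ℂ) 0 0 * ζ⁻¹ := by rw [h00]; ring
      exact mul_left_cancel₀ hp h'
    have hS0 : (↑g : Matrix (Fin 2) (Fin 2) ℂ) 1 1 = 0 := by
      by_contra hs
      refine hζne ?_
      have h' : (↑g : Matrix (Fin 2) (Fin 2) ℂ) 1 1 * ζ
          = (↑g : Matrix (Fin 2) (Fin 2) ℂ) 1 1 * ζ⁻¹ := by rw [h11]; ring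
      exact mul_left_cancel₀ hs h'
    rw [hP0, hS0] at hdet
    simp only [mul_zero, zero_mul, zero_sub] at hdet
    set q : ℂ := (↑g : Matrix (Fin 2) (Fin 2) ℂ) 0 1 with hqdef
    have hq0 : q ≠ 0 := by
      intro h0
      rw [h0] at hdet
      simp at hdet
    have hrq : (↑g : Matrix (Fin 2) (Fin 2) ℂ) 1 0 = -q⁻¹ := by
      field_simp
      linear_combination -hdet
    have hG : (↑g : Matrix (Fin 2) (Fin 2) ℂ) = !![0, q; -q⁻¹, 0] := by
      conv_lhs => rw [Matrix.eta_fin_two (↑g : Matrix (Fin 2) (Fin 2) ℂ)]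
      rw [hP0, hS0, hrq]
    rw [hG] at hjm
    have h00j := congrFun (congrFun hjm 0) 0
    simp [Matrix.mul_apply, Fin.sum_univ_two, Matrix.map_apply] at h00j
    -- h00j should say : ζ ^ j = conj q * (-q⁻¹)  (up to normalization)
    have hcq : (starRingEnd ℂ) q = -(ζ ^ j) * q := by
      have h' := h00j
      field_simp at h'
      linear_combination h'
    set c : ℂ := -Complex.I * q with hc
    have hc0 : c ≠ 0 := by
      rw [hc]
      exact mul_ne_zero (by simp [Complex.I_ne_zero]) hq0
    have hcc : (starRingEnd ℂ) c = ζ ^ j * c := by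
      rw [hc, _root_.map_mul, map_neg, Complex.conj_I, hcq]
      ring
    set r : ℝ := ‖c‖ with hr
    have hrpos : 0 < r := norm_pos_iff.mpr hc0
    have hrC : (r : ℂ) ≠ 0 := Complex.ofReal_ne_zero.mpr (ne_of_gt hrpos)
    set u : ℂ := c / (r : ℂ) with hu
    have hu0 : u ≠ 0 := div_ne_zero hc0 hrC
    have hnu : ‖u‖ = 1 := by
      rw [hu, norm_div, Complex.norm_real, Real.norm_eq_abs, abs_of_pos hrpos,
        ← hr, div_self (ne_of_gt hrpos)]
    have hcu : (starRingEnd ℂ) u = ζ ^ j * u := by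
      rw [hu, map_div₀, hcc, Complex.conj_ofReal]
      ring
    have husq : ζ ^ j * u ^ 2 = 1 := by
      have h1 : u * u⁻¹ = 1 := mul_inv_cancel₀ hu0
      rw [RCLike.inv_eq_conj hnu, hcu] at h1
      linear_combination h1
    have hu2 : u ^ 2 = ζ ^ (-j) := by
      rw [_root_.zpow_neg]
      exact (inv_eq_of_mul_eq_one_right husq).symm
    have hv2 : (ζ₂ ^ (-j)) ^ 2 = ζ ^ (-j) := by
      rw [← hz2, ← zpow_natCast (ζ₂ ^ (-j)) 2, ← _root_.zpow_mul, ← _root_.zpow_mul]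
      congr 1
      push_cast
      ring
    have hpm : u = ζ₂ ^ (-j) ∨ u = -(ζ₂ ^ (-j)) := by
      have hfac : (u - ζ₂ ^ (-j)) * (u + ζ₂ ^ (-j)) = 0 := by
        linear_combination hu2 - hv2
      rcases mul_eq_zero.mp hfac with h | h
      · exact Or.inl (sub_eq_zero.mp h)
      · exact Or.inr (eq_neg_of_add_eq_zero_left h)
    have hcru : c = (r : ℂ) * u := by
      rw [hu]
      field_simp
    have hex : ∃ x : ℝ, x ≠ 0 ∧ c = (x : ℂ) * ζ₂ ^ (-j) := by
      rcases hpm with h | h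
      · exact ⟨r, ne_of_gt hrpos, by rw [hcru, h]⟩
      · refine ⟨-r, by simp [ne_of_gt hrpos], ?_⟩
        rw [hcru, h]
        push_cast
        ring
    obtain ⟨x, hx0, hcx⟩ := hex
    have hqc : Complex.I * c = q := by
      rw [hc]
      linear_combination (-q) * Complex.I_sq
    have hqx : q = Complex.I * (x : ℂ) * ζ₂ ^ (-j) := by
      rw [← hqc, hcx]
      ring
    rcases Int.even_or_odd j with ⟨n, hn⟩ | ⟨n, hn⟩
    · -- j = n + n : case (2)
      refine ⟨ω ^ n, Subgroup.mem_zpowers_iff.mpr ⟨n, rfl⟩, Or.inr (Or.inl ⟨x, hx0, ?_⟩)⟩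
      rw [stmt8_coe_zpow ζ hζ0 ω hω n, hG, Matrix.mul_fin_two]
      have hz2n : ζ₂ ^ (-j) = ζ ^ (-n) := by
        rw [← hz2, ← _root_.zpow_mul]
        congr 1
        omega
      have he1 : q = Complex.I * (x : ℂ) * ζ ^ (-n) := by rw [hqx, hz2n]
      have he2 : -q⁻¹ = Complex.I * ((x : ℝ) : ℂ)⁻¹ * ζ ^ n := by
        rw [he1, mul_inv, mul_inv, Complex.inv_I, _root_.zpow_neg, inv_inv]
        ring
      simp only [mul_zero, zero_mul, add_zero, zero_add]
      rw [← he1, ← he2]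
    · -- j = 2 * n + 1 : case (3)
      refine ⟨ω ^ (n + 1), Subgroup.mem_zpowers_iff.mpr ⟨n + 1, rfl⟩,
        Or.inr (Or.inr ⟨x, hx0, ?_⟩)⟩
      rw [stmt8_coe_zpow ζ hζ0 ω hω (n + 1), hG, Matrix.mul_fin_two]
      have hzz : ζ₂ ^ (-j) = ζ₂ * ζ ^ (-(n + 1)) := by
        calc ζ₂ ^ (-j) = ζ₂ ^ ((1 : ℤ) + 2 * (-(n + 1))) := by congr 1; omega
          _ = ζ₂ ^ (1 : ℤ) * (ζ₂ ^ (2 : ℤ)) ^ (-(n + 1)) := by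
              rw [zpow_add₀ hζ₂0, _root_.zpow_mul]
          _ = ζ₂ * ζ ^ (-(n + 1)) := by rw [zpow_one, hz2]
      have he1 : q = Complex.I * (x : ℂ) * ζ₂ * ζ ^ (-(n + 1)) := by
        rw [hqx, hzz]
        ring
      have he2 : -q⁻¹ = Complex.I * ((x : ℝ) : ℂ)⁻¹ * ζ₂⁻¹ * ζ ^ (n + 1) := by
        rw [he1, mul_inv, mul_inv, mul_inv, Complex.inv_I, _root_.zpow_neg, inv_inv]
        ring
      simp only [mul_zero, zero_mul, add_zero, zero_add]
      rw [← he1, ← he2]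
end

section
/- Let k ≥ 4 be an even integer, let ζ_k be a primitive k-th root of unity in ℂ, and let ζ_{2k} be a primitive 2k-th root of unity with ζ_{2k}² = ζ_k. Let g be an element of the normalizer of A_k in SL₂(ℂ). Then σ_c(g)·g ∈ A_k if and only if there exists h ∈ A_k such that one of the following holds: (1) g = diag(x, x⁻¹)·h for some nonzero x ∈ ℝ; (2) g = diag(x·ζ_{2k}, x⁻¹·ζ_{2k}⁻¹)·h for some nonzero x ∈ ℝ; (3) g = m(b)·h for some b ∈ ℂ with |b| = 1, where m(b) has rows (0, b) and (−b⁻¹, 0). (This computes, for k even, the 1-cocycles Z¹(Gal(ℂ/ℝ), N/A_k) for the Galois action induced by σ_c, where N is the normalizer of A_k.) -/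
open Matrix Complex

private lemma sl2_zpow_diag (ζ : ℂ) (hζ0 : ζ ≠ 0)
    (ω : Matrix.SpecialLinearGroup (Fin 2) ℂ)
    (hω : (↑ω : Matrix (Fin 2) (Fin 2) ℂ) = !![ζ, 0; 0, ζ⁻¹]) (j : ℤ) :
    (↑(ω ^ j) : Matrix (Fin 2) (Fin 2) ℂ) = !![ζ ^ j, 0; 0, (ζ ^ j)⁻¹] := by
  induction j using Int.induction_on with
  | zero => simp [Matrix.one_fin_two]
  | succ n ih =>
      rw [_root_.zpow_add_one, Matrix.SpecialLinearGroup.coe_mul, ih, hω, Matrix.mul_fin_two]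
      rw [zpow_add_one₀ hζ0]
      ext i j
      fin_cases i <;> fin_cases j <;> simp <;> field_simp
  | pred n ih =>
      rw [_root_.zpow_sub_one, Matrix.SpecialLinearGroup.coe_mul, ih,
        Matrix.SpecialLinearGroup.coe_inv, hω, Matrix.adjugate_fin_two_of, Matrix.mul_fin_two]
      rw [zpow_sub_one₀ hζ0]
      ext i j
      fin_cases i <;> fin_cases j <;> simp <;> field_simp

private lemma ct2 (p q r s : ℂ) :
    (!![p, q; r, s])ᴴ = !![starRingEnd ℂ p, starRingEnd ℂ r; starRingEnd ℂ q, starRingEnd ℂ s] := by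
  ext i j
  fin_cases i <;> fin_cases j <;> simp [Matrix.conjTranspose_apply]

set_option maxHeartbeats 2000000 in
/-- Let `k ≥ 4` be even, `ζ` a primitive `k`-th root of unity, `ζ₂` a primitive
`2k`-th root of unity with `ζ₂² = ζ`, `A_k = ⟨ω⟩` with `ω = diag(ζ, ζ⁻¹)`, and let `g` lie in
the normalizer of `A_k` in `SL₂(ℂ)`. Then `σ_c(g)·g ∈ A_k` iff there is `h ∈ A_k` with
(1) `g = diag(x, x⁻¹)·h`, `x ∈ ℝ*`; or (2) `g = diag(x·ζ₂, x⁻¹·ζ₂⁻¹)·h`, `x ∈ ℝ*`; or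
(3) `g = !![0, b; −b⁻¹, 0]·h`, `b ∈ ℂ`, `|b| = 1`. -/
theorem statement9 (k : ℕ) (hk : 4 ≤ k) (hev : Even k)
    (ζ ζ₂ : ℂ) (hζ : IsPrimitiveRoot ζ k) (hζ₂ : IsPrimitiveRoot ζ₂ (2 * k))
    (hsq : ζ₂ ^ 2 = ζ)
    (ω : Matrix.SpecialLinearGroup (Fin 2) ℂ)
    (hω : (↑ω : Matrix (Fin 2) (Fin 2) ℂ) = !![ζ, 0; 0, ζ⁻¹])
    (g : Matrix.SpecialLinearGroup (Fin 2) ℂ)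
    (hg : g ∈ Subgroup.normalizer (Subgroup.zpowers ω : Set (Matrix.SpecialLinearGroup (Fin 2) ℂ))) :
    (∃ h ∈ Subgroup.zpowers ω,
        ((↑g : Matrix (Fin 2) (Fin 2) ℂ)ᴴ)⁻¹ * (↑g : Matrix (Fin 2) (Fin 2) ℂ)
          = (↑h : Matrix (Fin 2) (Fin 2) ℂ)) ↔
      ∃ h ∈ Subgroup.zpowers ω,
        (∃ x : ℝ, x ≠ 0 ∧
          (↑g : Matrix (Fin 2) (Fin 2) ℂ)
            = !![(x : ℂ), 0; 0, (x : ℂ)⁻¹] * (↑h : Matrix (Fin 2) (Fin 2) ℂ)) ∨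
        (∃ x : ℝ, x ≠ 0 ∧
          (↑g : Matrix (Fin 2) (Fin 2) ℂ)
            = !![(x : ℂ) * ζ₂, 0; 0, (x : ℂ)⁻¹ * ζ₂⁻¹]
                * (↑h : Matrix (Fin 2) (Fin 2) ℂ)) ∨
        (∃ b : ℂ, ‖b‖ = 1 ∧
          (↑g : Matrix (Fin 2) (Fin 2) ℂ)
            = !![0, b; -b⁻¹, 0] * (↑h : Matrix (Fin 2) (Fin 2) ℂ)) := by
  have hkz : k ≠ 0 := by omega
  haveI : NeZero k := ⟨hkz⟩
  have hζk : ζ ^ k = 1 := hζ.pow_eq_one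
  have hζ0 : ζ ≠ 0 := fun h0 => by simp [h0, zero_pow hkz] at hζk
  have hζ₂k : ζ₂ ^ (2 * k) = 1 := hζ₂.pow_eq_one
  have hζ₂0 : ζ₂ ≠ 0 := fun h0 => by simp [h0, zero_pow (by omega : 2 * k ≠ 0)] at hζ₂k
  have hcζ : starRingEnd ℂ ζ = ζ⁻¹ :=
    (Complex.inv_eq_conj (Complex.norm_eq_one_of_pow_eq_one hζk hkz)).symm
  have hcζ₂ : starRingEnd ℂ ζ₂ = ζ₂⁻¹ :=
    (Complex.inv_eq_conj (Complex.norm_eq_one_of_pow_eq_one hζ₂k (by omega))).symm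
  have hζsq : ζ ^ 2 ≠ 1 := hζ.pow_ne_one_of_pos_of_lt (by norm_num) (by omega)
  set G := (↑g : Matrix (Fin 2) (Fin 2) ℂ) with hGdef
  have hdetG : G.det = 1 := g.2
  have hdetGH : IsUnit (Gᴴ).det := by
    rw [Matrix.det_conjTranspose, hdetG]
    simp
  -- classification of g
  have hconj : g * ω * g⁻¹ ∈ Subgroup.zpowers ω :=
    (Subgroup.mem_normalizer_iff.mp hg ω).mp (Subgroup.mem_zpowers ω)
  obtain ⟨n, hn⟩ := Subgroup.mem_zpowers_iff.mp hconj
  have hGω : G * !![ζ, 0; 0, ζ⁻¹] = !![ζ ^ n, 0; 0, (ζ ^ n)⁻¹] * G := by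
    have h1 : g * ω = ω ^ n * g := by rw [hn]; group
    have h2 := congrArg (fun m : Matrix.SpecialLinearGroup (Fin 2) ℂ =>
      (↑m : Matrix (Fin 2) (Fin 2) ℂ)) h1
    simpa [hω, sl2_zpow_diag ζ hζ0 ω hω n] using h2
  have hcases : (∃ a : ℂ, a ≠ 0 ∧ G = !![a, 0; 0, a⁻¹]) ∨
      (∃ b : ℂ, b ≠ 0 ∧ G = !![0, b; -b⁻¹, 0]) := by
    set a := G 0 0 with ha
    set b := G 0 1 with hb
    set c := G 1 0 with hc
    set d := G 1 1 with hd
    have hGeta : G = !![a, b; c, d] := by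
      rw [Matrix.eta_fin_two G]
    have hdet : a * d - b * c = 1 := by
      rw [ha, hb, hc, hd, ← Matrix.det_fin_two, hdetG]
    rw [hGeta, Matrix.mul_fin_two, Matrix.mul_fin_two] at hGω
    have e00 : a * ζ = ζ ^ n * a := by
      have := congrFun (congrFun hGω 0) 0; simpa using this
    have e01 : b * ζ⁻¹ = ζ ^ n * b := by
      have := congrFun (congrFun hGω 0) 1; simpa using this
    have e10 : c * ζ = (ζ ^ n)⁻¹ * c := by
      have := congrFun (congrFun hGω 1) 0; simpa using this
    have e11 : d * ζ⁻¹ = (ζ ^ n)⁻¹ * d := by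
      have := congrFun (congrFun hGω 1) 1; simpa using this
    have hζn0 : ζ ^ n ≠ 0 := zpow_ne_zero n hζ0
    by_cases ha0 : a = 0
    · right
      have hb0 : b ≠ 0 := by
        intro h0
        rw [ha0, h0] at hdet; simp at hdet
      have hzn : ζ ^ n = ζ⁻¹ :=
        mul_right_cancel₀ hb0 (show ζ ^ n * b = ζ⁻¹ * b by linear_combination -e01)
      have hd0 : d = 0 := by
        by_contra hd0
        rw [hzn, inv_inv] at e11
        have h1 : ζ⁻¹ = ζ :=
          mul_left_cancel₀ hd0 (show d * ζ⁻¹ = d * ζ by linear_combination e11)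
        apply hζsq
        rw [sq]
        nth_rewrite 1 [← h1]
        exact inv_mul_cancel₀ hζ0
      have hc' : c = -b⁻¹ := by
        rw [ha0, hd0] at hdet
        field_simp at hdet ⊢
        linear_combination -hdet
      exact ⟨b, hb0, by rw [hGeta, ha0, hd0, hc']⟩
    · left
      have hzn : ζ ^ n = ζ :=
        mul_left_cancel₀ ha0 (show a * ζ ^ n = a * ζ by linear_combination -e00)
      have hb0 : b = 0 := by
        by_contra hb0
        rw [hzn] at e01
        have h1 : ζ⁻¹ = ζ :=
          mul_left_cancel₀ hb0 (show b * ζ⁻¹ = b * ζ by linear_combination e01)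
        apply hζsq
        rw [sq]
        nth_rewrite 1 [← h1]
        exact inv_mul_cancel₀ hζ0
      have hc0 : c = 0 := by
        by_contra hc0
        rw [hzn] at e10
        have h1 : ζ = ζ⁻¹ :=
          mul_left_cancel₀ hc0 (show c * ζ = c * ζ⁻¹ by linear_combination e10)
        apply hζsq
        rw [sq]
        nth_rewrite 1 [h1]
        exact inv_mul_cancel₀ hζ0
      have hd' : d = a⁻¹ := by
        rw [hb0] at hdet
        field_simp at hdet ⊢
        linear_combination hdet
      exact ⟨a, ha0, by rw [hGeta, hb0, hc0, hd']⟩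
  have habsζ : ‖ζ‖ = 1 := by
    exact Complex.norm_eq_one_of_pow_eq_one hζk hkz
  have hmemdiag : ∀ h : Matrix.SpecialLinearGroup (Fin 2) ℂ, h ∈ Subgroup.zpowers ω →
      ∃ u : ℂ, u ≠ 0 ∧ u ^ k = 1 ∧ starRingEnd ℂ u = u⁻¹ ∧
        (↑h : Matrix (Fin 2) (Fin 2) ℂ) = !![u, 0; 0, u⁻¹] := by
    intro h hh
    obtain ⟨j, hj⟩ := Subgroup.mem_zpowers_iff.mp hh
    refine ⟨ζ ^ j, zpow_ne_zero j hζ0, ?_, ?_, ?_⟩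
    · rw [← _root_.zpow_natCast, ← _root_.zpow_mul, mul_comm, _root_.zpow_mul, _root_.zpow_natCast, hζk, _root_.one_zpow]
    · rw [map_zpow₀, hcζ, _root_.inv_zpow]
    · rw [← hj]; exact sl2_zpow_diag ζ hζ0 ω hω j
  have hkey : ∀ h : Matrix.SpecialLinearGroup (Fin 2) ℂ,
      Gᴴ * (↑h : Matrix (Fin 2) (Fin 2) ℂ) = G →
      (Gᴴ)⁻¹ * G = (↑h : Matrix (Fin 2) (Fin 2) ℂ) := by
    intro h hE
    have h5 : (Gᴴ)⁻¹ * (Gᴴ * (↑h : Matrix (Fin 2) (Fin 2) ℂ)) = ↑h := by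
      rw [← mul_assoc, Matrix.nonsing_inv_mul _ hdetGH, one_mul]
    rwa [hE] at h5
  have hωpow : ∀ m : ℕ, (↑(ω ^ m) : Matrix (Fin 2) (Fin 2) ℂ) = !![ζ ^ m, 0; 0, (ζ ^ m)⁻¹] := by
    intro m
    have := sl2_zpow_diag ζ hζ0 ω hω (m : ℤ)
    rwa [_root_.zpow_natCast, _root_.zpow_natCast] at this
  constructor
  · rintro ⟨h, hhmem, hh⟩
    obtain ⟨u, hu0, huk, hcu, hhu⟩ := hmemdiag h hhmem
    obtain ⟨i, hik, hiu⟩ := hζ.eq_pow_of_pow_eq_one huk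
    have hGH : Gᴴ * (↑h : Matrix (Fin 2) (Fin 2) ℂ) = G := by
      have h2 : Gᴴ * ((Gᴴ)⁻¹ * G) = Gᴴ * (↑h : Matrix (Fin 2) (Fin 2) ℂ) :=
        congrArg (fun M => Gᴴ * M) hh
      rw [← h2, ← mul_assoc, Matrix.mul_nonsing_inv _ hdetGH, one_mul]
    have hζ₂i0 : ζ₂ ^ i ≠ 0 := pow_ne_zero _ hζ₂0
    rcases hcases with ⟨a, ha0, hGa⟩ | ⟨b, hb0, hGb⟩
    · -- diagonal case
      rw [hGa, ct2, hhu, Matrix.mul_fin_two] at hGH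
      have key00 : starRingEnd ℂ a * u = a := by
        have := congrFun (congrFun hGH 0) 0; simpa using this
      have huu : u = ζ₂ ^ i * ζ₂ ^ i := by
        rw [← hiu, ← hsq, ← pow_mul, two_mul, pow_add]
      have hre : starRingEnd ℂ (a * (ζ₂ ^ i)⁻¹) = a * (ζ₂ ^ i)⁻¹ := by
        rw [_root_.map_mul, _root_.map_inv₀, _root_.map_pow, hcζ₂, _root_.inv_pow, inv_inv]
        have key00' : starRingEnd ℂ a * (ζ₂ ^ i * ζ₂ ^ i) = a := by
          rw [← huu]; exact key00
        field_simp
        linear_combination key00'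
      obtain ⟨r, hr⟩ := Complex.conj_eq_iff_real.mp hre
      have ha_eq : a = (r : ℂ) * ζ₂ ^ i := by
        field_simp at hr
        linear_combination hr
      have hr0 : r ≠ 0 := by
        intro h0
        apply ha0
        rw [ha_eq, h0]
        simp
      rcases Nat.even_or_odd i with ⟨m, hm2⟩ | ⟨m, hm2⟩
      · have hpow : ζ₂ ^ i = ζ ^ m := by
          rw [hm2, ← hsq, ← pow_mul, two_mul]
        refine ⟨ω ^ m, pow_mem (Subgroup.mem_zpowers ω) m, Or.inl ⟨r, hr0, ?_⟩⟩
        rw [hGa, hωpow m, Matrix.mul_fin_two, ha_eq, hpow]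
        have hζm0 : ζ ^ m ≠ 0 := pow_ne_zero _ hζ0
        have hrc0 : (r : ℂ) ≠ 0 := Complex.ofReal_ne_zero.mpr hr0
        ext i' j'
        fin_cases i' <;> fin_cases j' <;> simp [mul_inv] <;> ring
      · have hpow : ζ₂ ^ i = ζ₂ * ζ ^ m := by
          rw [hm2, pow_add, pow_mul, hsq, pow_one, mul_comm]
        refine ⟨ω ^ m, pow_mem (Subgroup.mem_zpowers ω) m,
          Or.inr (Or.inl ⟨r, hr0, ?_⟩)⟩
        rw [hGa, hωpow m, Matrix.mul_fin_two, ha_eq, hpow]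
        have hζm0 : ζ ^ m ≠ 0 := pow_ne_zero _ hζ0
        have hrc0 : (r : ℂ) ≠ 0 := Complex.ofReal_ne_zero.mpr hr0
        ext i' j'
        fin_cases i' <;> fin_cases j' <;> simp [mul_inv] <;> ring
    · -- antidiagonal case
      have hcb0 : starRingEnd ℂ b ≠ 0 := fun h0 =>
        hb0 (by rw [← Complex.conj_conj b, h0, map_zero])
      rw [hGb, ct2, hhu, Matrix.mul_fin_two] at hGH
      have key01 : -(starRingEnd ℂ b)⁻¹ * u⁻¹ = b := by
        have := congrFun (congrFun hGH 0) 1; simpa using this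
      have h1 : b * starRingEnd ℂ b * u = -1 := by
        field_simp at key01
        linear_combination -key01
      have habsu : ‖u‖ = 1 := by
        rw [← hiu, norm_pow, habsζ, one_pow]
      have h2 : ‖b‖ * ‖b‖ = 1 := by
        have h3 := congrArg (fun z : ℂ => ‖z‖) h1
        simpa [norm_mul, Complex.norm_conj, habsu] using h3
      have habsb : ‖b‖ = 1 := by
        rcases mul_self_eq_one_iff.mp h2 with h3 | h3
        · exact h3
        · have := norm_nonneg b
          linarith
      refine ⟨1, one_mem _, Or.inr (Or.inr ⟨b, habsb, ?_⟩)⟩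
      rw [hGb]
      simp
  · rintro ⟨h, hhmem, hcase3⟩
    obtain ⟨u, hu0, huk, hcu, hhu⟩ := hmemdiag h hhmem
    have hh2 : (↑(h ^ 2) : Matrix (Fin 2) (Fin 2) ℂ) = !![u * u, 0; 0, (u * u)⁻¹] := by
      rw [_root_.pow_two, Matrix.SpecialLinearGroup.coe_mul, hhu, Matrix.mul_fin_two]
      ext i' j'
      fin_cases i' <;> fin_cases j' <;> simp [mul_inv]
    rcases hcase3 with ⟨x, hx0, hGx⟩ | ⟨x, hx0, hGx⟩ | ⟨b, hb1, hGx⟩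
    · have hx0' : (x : ℂ) ≠ 0 := Complex.ofReal_ne_zero.mpr hx0
      refine ⟨h ^ 2, pow_mem hhmem 2, hkey _ ?_⟩
      rw [hGx, hhu, Matrix.mul_fin_two, ct2, hh2, Matrix.mul_fin_two]
      ext i' j'
      fin_cases i' <;> fin_cases j' <;>
        simp [_root_.map_mul, _root_.map_inv₀, hcu, Complex.conj_ofReal, inv_inv] <;> field_simp <;> ring
    · have hx0' : (x : ℂ) ≠ 0 := Complex.ofReal_ne_zero.mpr hx0
      refine ⟨ω * h ^ 2, mul_mem (Subgroup.mem_zpowers ω) (pow_mem hhmem 2), hkey _ ?_⟩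
      have hwh2 : (↑(ω * h ^ 2) : Matrix (Fin 2) (Fin 2) ℂ)
          = !![ζ₂ ^ 2 * (u * u), 0; 0, (ζ₂ ^ 2 * (u * u))⁻¹] := by
        rw [Matrix.SpecialLinearGroup.coe_mul, hω, hh2, Matrix.mul_fin_two, ← hsq]
        ext i' j'
        fin_cases i' <;> fin_cases j' <;> simp [mul_inv] <;> ring
      have hGm : G = !![(x : ℂ) * ζ₂ * u, 0; 0, (x : ℂ)⁻¹ * ζ₂⁻¹ * u⁻¹] := by
        rw [hGx, hhu, Matrix.mul_fin_two]
        ext i' j'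
        fin_cases i' <;> fin_cases j' <;> simp [mul_assoc]
      have hGH2 : Gᴴ = !![(x : ℂ) * ζ₂⁻¹ * u⁻¹, 0; 0, (x : ℂ)⁻¹ * ζ₂ * u] := by
        rw [hGm, ct2]
        ext i' j'
        fin_cases i' <;> fin_cases j' <;>
          simp [_root_.map_mul, _root_.map_inv₀, hcu, hcζ₂, Complex.conj_ofReal, inv_inv]
      rw [hGH2, hwh2, hGm, Matrix.mul_fin_two]
      ext i' j'
      fin_cases i' <;> fin_cases j' <;> simp <;> field_simp <;> ring
    · obtain ⟨m, hm⟩ := hev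
      have hζm : ζ ^ m = -1 := by
        have h1 : ζ ^ m * ζ ^ m = 1 := by rw [← pow_add, ← hm, hζk]
        rcases mul_self_eq_one_iff.mp h1 with h2 | h2
        · exact absurd h2 (hζ.pow_ne_one_of_pos_of_lt (by omega) (by omega))
        · exact h2
      have hb0 : b ≠ 0 := by
        intro h0
        rw [h0] at hb1
        simp at hb1
      have hcb : starRingEnd ℂ b = b⁻¹ :=
        (Complex.inv_eq_conj hb1).symm
      refine ⟨ω ^ m, pow_mem (Subgroup.mem_zpowers ω) m, hkey _ ?_⟩
      have hwm : (↑(ω ^ m) : Matrix (Fin 2) (Fin 2) ℂ) = !![(-1 : ℂ), 0; 0, -1] := by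
        rw [hωpow m, hζm]
        norm_num
      have hGm : G = !![0, b * u⁻¹; -b⁻¹ * u, 0] := by
        rw [hGx, hhu, Matrix.mul_fin_two]
        ext i' j'
        fin_cases i' <;> fin_cases j' <;> simp
      have hGH2 : Gᴴ = !![0, -(b * u⁻¹); b⁻¹ * u, 0] := by
        rw [hGm, ct2]
        ext i' j'
        fin_cases i' <;> fin_cases j' <;>
          simp [_root_.map_mul, _root_.map_inv₀, _root_.map_neg, hcu, hcb, inv_inv]
      rw [hGH2, hwm, hGm, Matrix.mul_fin_two]
      ext i' j'
      fin_cases i' <;> fin_cases j' <;> simp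
end

section
/- Let k ≥ 1 be an integer and let H be a cyclic subgroup of SL₂(ℂ) of order k. Then H is conjugate in SL₂(ℂ) to the subgroup A_k generated by ω_k = diag(ζ_k, ζ_k⁻¹), where ζ_k is a primitive k-th root of unity in ℂ; that is, there exists g ∈ SL₂(ℂ) with g·H·g⁻¹ = A_k. -/
open Matrix Complex

lemma dpow (a d : ℂ) (n : ℕ) :
    (!![a, 0; 0, d] : Matrix (Fin 2) (Fin 2) ℂ) ^ n = !![a ^ n, 0; 0, d ^ n] := by
  induction n with
  | zero => simp [Matrix.one_fin_two]
  | succ n ih => rw [pow_succ, ih, Matrix.mul_fin_two]; ring_nf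

lemma conj_diag (k : ℕ) (hk : 1 ≤ k) (h : Matrix.SpecialLinearGroup (Fin 2) ℂ)
    (hhk : h ^ k = 1) :
    ∃ (g : Matrix.SpecialLinearGroup (Fin 2) ℂ) (l : ℂ), l ≠ 0 ∧
      ((g * h * g⁻¹ : Matrix.SpecialLinearGroup (Fin 2) ℂ) : Matrix (Fin 2) (Fin 2) ℂ)
        = !![l, 0; 0, l⁻¹] := by
  obtain ⟨a, b, c, d, hM⟩ : ∃ a b c d : ℂ,
      (h : Matrix (Fin 2) (Fin 2) ℂ) = !![a, b; c, d] :=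
    ⟨_, _, _, _, Matrix.eta_fin_two _⟩
  have hdet : a * d - b * c = 1 := by
    have := h.2
    rwa [hM, Matrix.det_fin_two_of] at this
  have hMk : (!![a, b; c, d] : Matrix (Fin 2) (Fin 2) ℂ) ^ k = 1 := by
    have := congrArg (fun x : Matrix.SpecialLinearGroup (Fin 2) ℂ =>
      (x : Matrix (Fin 2) (Fin 2) ℂ)) hhk
    simpa [hM] using this
  have hkC : (k : ℂ) ≠ 0 := Nat.cast_ne_zero.mpr (by omega)
  -- scalar case
  have hscalar : (a + d) ^ 2 = 4 → b = 0 ∧ c = 0 := by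
    intro ht
    set l : ℂ := (a + d) / 2 with hldef
    have hl2 : l ^ 2 = 1 := by rw [hldef]; field_simp; linear_combination ht
    have hl0 : l ≠ 0 := by
      intro h0; rw [h0] at hl2; norm_num at hl2
    set N : Matrix (Fin 2) (Fin 2) ℂ := !![a - l, b; c, d - l] with hNdef
    have hN2 : N * N = 0 := by
      rw [hNdef, Matrix.mul_fin_two]
      ext i j
      fin_cases i <;> fin_cases j <;>
        simp [hldef] <;>
        [ (linear_combination ht / 4 - hdet);
          (ring_nf);
          (ring_nf);
          (linear_combination ht / 4 - hdet) ]
    have hsplit : (!![a, b; c, d] : Matrix (Fin 2) (Fin 2) ℂ) = l • 1 + N := by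
      rw [hNdef, Matrix.one_fin_two]
      ext i j
      fin_cases i <;> fin_cases j <;> simp
    have hpow : ∀ n : ℕ, (!![a, b; c, d] : Matrix (Fin 2) (Fin 2) ℂ) ^ n
        = (l ^ n) • 1 + ((n : ℂ) * l ^ (n + 1)) • N := by
      intro n
      induction n with
      | zero => simp
      | succ n ih =>
        rw [pow_succ, ih, hsplit]
        simp only [mul_add, add_mul, smul_mul_assoc, mul_smul_comm, one_mul, mul_one,
          hN2, smul_zero, mul_zero, add_zero, smul_smul]
        match_scalars
        · ring
        · push_cast; linear_combination (-(l ^ n) - n * l ^ n) * hl2 + ((n : ℂ) * l ^ n / 4) * ht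
    have hkey := hMk
    rw [hpow k] at hkey
    have hb : b = 0 := by
      have := congrArg (fun X : Matrix (Fin 2) (Fin 2) ℂ => X 0 1) hkey
      simp [hNdef, Matrix.one_apply] at this
      rcases this with (h1 | h1) | h1
      · simp [h1] at hkC
      · exact absurd h1 hl0
      · exact h1
    have hc : c = 0 := by
      have := congrArg (fun X : Matrix (Fin 2) (Fin 2) ℂ => X 1 0) hkey
      simp [hNdef, Matrix.one_apply] at this
      rcases this with (h1 | h1) | h1
      · simp [h1] at hkC
      · exact absurd h1 hl0
      · exact h1
    exact ⟨hb, hc⟩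
  by_cases hbc : b = 0 ∧ c = 0
  · -- already diagonal
    have had : a * d = 1 := by linear_combination hdet + c * hbc.1
    have ha0 : a ≠ 0 := left_ne_zero_of_mul_eq_one had
    refine ⟨1, a, ha0, ?_⟩
    have h1 : (1 * h * 1⁻¹ : Matrix.SpecialLinearGroup (Fin 2) ℂ) = h := by group
    rw [h1, hM, hbc.1, hbc.2, inv_eq_of_mul_eq_one_right had]
  · have ht4 : (a + d) ^ 2 ≠ 4 := fun ht => hbc (hscalar ht)
    by_cases hb : b = 0
    · -- lower triangular, c ≠ 0
      have had : a * d = 1 := by linear_combination hdet + c * hb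
      have ha0 : a ≠ 0 := left_ne_zero_of_mul_eq_one had
      have hadne : a - d ≠ 0 := by
        intro h0
        apply ht4
        linear_combination (a - d) * h0 + 4 * had
      have hd : a⁻¹ = d := inv_eq_of_mul_eq_one_right had
      set gP : Matrix.SpecialLinearGroup (Fin 2) ℂ :=
        ⟨!![1, 0; c / (a - d), 1], by simp [Matrix.det_fin_two_of]⟩ with hgP
      set Dsl : Matrix.SpecialLinearGroup (Fin 2) ℂ :=
        ⟨!![a, 0; 0, a⁻¹], by simp [Matrix.det_fin_two_of, mul_inv_cancel₀ ha0]⟩ with hDsl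
      have key : h * gP = gP * Dsl := by
        apply Subtype.ext
        simp only [Matrix.SpecialLinearGroup.coe_mul]
        show ((h : Matrix (Fin 2) (Fin 2) ℂ) * !![1, 0; c / (a - d), 1] : Matrix (Fin 2) (Fin 2) ℂ)
          = !![1, 0; c / (a - d), 1] * !![a, 0; 0, a⁻¹]
        rw [hM, hd, Matrix.mul_fin_two, Matrix.mul_fin_two]
        ext i j
        fin_cases i <;> fin_cases j <;> simp [hb] <;> field_simp <;> ring
      refine ⟨gP⁻¹, a, ha0, ?_⟩
      have hgh : gP⁻¹ * h * (gP⁻¹)⁻¹ = Dsl := by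
        rw [inv_inv, mul_assoc, key, inv_mul_cancel_left]
      rw [hgh]
    · -- b ≠ 0
      obtain ⟨s, hs⟩ := IsAlgClosed.exists_pow_nat_eq ((a + d) ^ 2 - 4) two_pos
      have hsne : s ≠ 0 := by
        intro h0; apply ht4; rw [h0] at hs; linear_combination -hs
      set l : ℂ := (a + d + s) / 2 with hldef
      have hlmu : l * ((a + d) - l) = 1 := by
        rw [hldef]; field_simp; linear_combination -hs
      have hl0 : l ≠ 0 := left_ne_zero_of_mul_eq_one hlmu
      have hinv : l⁻¹ = a + d - l := inv_eq_of_mul_eq_one_right hlmu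
      have hql : l ^ 2 = (a + d) * l - 1 := by linear_combination -hlmu
      have hδ : -(b * s) ≠ 0 := neg_ne_zero.mpr (mul_ne_zero hb hsne)
      set u : ℂ := (-(b * s))⁻¹ with hudef
      have hu : -(b * s) * u = 1 := mul_inv_cancel₀ hδ
      have hdP : Matrix.det !![b * u, b; (l - a) * u, d - l] = 1 := by
        rw [Matrix.det_fin_two_of]
        linear_combination hu + (-2 * b * u) * hldef
      set gP : Matrix.SpecialLinearGroup (Fin 2) ℂ :=
        ⟨!![b * u, b; (l - a) * u, d - l], hdP⟩ with hgP
      set Dsl : Matrix.SpecialLinearGroup (Fin 2) ℂ :=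
        ⟨!![l, 0; 0, l⁻¹], by simp [Matrix.det_fin_two_of, mul_inv_cancel₀ hl0]⟩ with hDsl
      have key : h * gP = gP * Dsl := by
        apply Subtype.ext
        simp only [Matrix.SpecialLinearGroup.coe_mul]
        show ((h : Matrix (Fin 2) (Fin 2) ℂ) * !![b * u, b; (l - a) * u, d - l] : Matrix (Fin 2) (Fin 2) ℂ)
          = !![b * u, b; (l - a) * u, d - l] * !![l, 0; 0, l⁻¹]
        rw [hM, hinv, Matrix.mul_fin_two, Matrix.mul_fin_two]
        ext i j
        fin_cases i <;> fin_cases j <;> simp <;>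
          [ring; ring; (linear_combination (-u) * hql + (-u) * hdet);
           (linear_combination -hdet - hql)]
      refine ⟨gP⁻¹, l, hl0, ?_⟩
      have hgh : gP⁻¹ * h * (gP⁻¹)⁻¹ = Dsl := by
        rw [inv_inv, mul_assoc, key, inv_mul_cancel_left]
      rw [hgh]

/-- Every cyclic subgroup `H` of `SL₂(ℂ)` of order `k ≥ 1` is conjugate to
`A_k = ⟨ω⟩`, where `ω = diag(ζ, ζ⁻¹)` and `ζ` is a primitive `k`-th root of unity: there is
`g ∈ SL₂(ℂ)` with `g·H·g⁻¹ = A_k`. -/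
theorem statement15 (k : ℕ) (hk : 1 ≤ k) (ζ : ℂ) (hζ : IsPrimitiveRoot ζ k)
    (ω : Matrix.SpecialLinearGroup (Fin 2) ℂ)
    (hω : (↑ω : Matrix (Fin 2) (Fin 2) ℂ) = !![ζ, 0; 0, ζ⁻¹])
    (H : Subgroup (Matrix.SpecialLinearGroup (Fin 2) ℂ))
    (hcyc : IsCyclic H) (hcard : Nat.card H = k) :
    ∃ g : Matrix.SpecialLinearGroup (Fin 2) ℂ,
      Subgroup.map (MulAut.conj g).toMonoidHom H = Subgroup.zpowers ω := by
  haveI : NeZero k := ⟨by omega⟩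
  have hωpow : ∀ n : ℕ, ((ω ^ n : Matrix.SpecialLinearGroup (Fin 2) ℂ) :
      Matrix (Fin 2) (Fin 2) ℂ) = !![ζ ^ n, 0; 0, (ζ ^ n)⁻¹] := by
    intro n
    have h1 : ((ω ^ n : Matrix.SpecialLinearGroup (Fin 2) ℂ) : Matrix (Fin 2) (Fin 2) ℂ)
        = (↑ω : Matrix (Fin 2) (Fin 2) ℂ) ^ n := by simp
    rw [h1, hω, dpow, inv_pow]
  have hordω : orderOf ω = k := by
    rw [hζ.eq_orderOf]
    apply orderOf_eq_orderOf_iff.mpr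
    intro n
    constructor
    · intro hn
      have := congrArg (fun x : Matrix.SpecialLinearGroup (Fin 2) ℂ =>
        (x : Matrix (Fin 2) (Fin 2) ℂ) 0 0) hn
      simpa [hωpow n] using this
    · intro hn
      apply Subtype.ext
      rw [show ((ω ^ n : Matrix.SpecialLinearGroup (Fin 2) ℂ) : Matrix (Fin 2) (Fin 2) ℂ)
        = !![ζ ^ n, 0; 0, (ζ ^ n)⁻¹] from hωpow n, hn, inv_one]
      simp [Matrix.one_fin_two]
  have hfin : Finite H := Nat.finite_of_card_ne_zero (by omega)
  obtain ⟨x, hx⟩ := hcyc.exists_generator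
  have htop : Subgroup.zpowers x = ⊤ := (Subgroup.eq_top_iff' _).mpr hx
  have hordx : orderOf x = k := by
    rw [← Nat.card_zpowers, htop, Subgroup.card_top, hcard]
  have hordh : orderOf (x : Matrix.SpecialLinearGroup (Fin 2) ℂ) = k := by
    rw [← hordx]
    exact orderOf_injective H.subtype H.subtype_injective x
  have hHz : H = Subgroup.zpowers (x : Matrix.SpecialLinearGroup (Fin 2) ℂ) := by
    ext y
    constructor
    · intro hy
      obtain ⟨n, hn⟩ := Subgroup.mem_zpowers_iff.mp (hx ⟨y, hy⟩)
      exact Subgroup.mem_zpowers_iff.mpr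
        ⟨n, by simpa using congrArg (fun z : H => (z : Matrix.SpecialLinearGroup (Fin 2) ℂ)) hn⟩
    · intro hy
      obtain ⟨n, hn⟩ := Subgroup.mem_zpowers_iff.mp hy
      rw [← hn]
      exact Subgroup.zpow_mem H x.2 n
  have hpk : (x : Matrix.SpecialLinearGroup (Fin 2) ℂ) ^ k = 1 := by
    rw [← hordh]; exact pow_orderOf_eq_one _
  obtain ⟨g, l, hl0, hD⟩ := conj_diag k hk _ hpk
  set D : Matrix.SpecialLinearGroup (Fin 2) ℂ := g * ↑x * g⁻¹ with hDdef
  have hordD : orderOf D = k := by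
    rw [hDdef, ← hordh]
    have : g * ↑x * g⁻¹ = (MulAut.conj g) (x : Matrix.SpecialLinearGroup (Fin 2) ℂ) := by
      simp [MulAut.conj_apply]
    rw [this]
    exact orderOf_injective (MulAut.conj g).toMonoidHom (MulEquiv.injective _) _
  have hDk : D ^ k = 1 := by rw [hDdef, conj_pow, hpk, mul_one, mul_inv_cancel]
  have hlk : l ^ k = 1 := by
    have h1 := congrArg (fun z : Matrix.SpecialLinearGroup (Fin 2) ℂ =>
      (z : Matrix (Fin 2) (Fin 2) ℂ) 0 0) hDk
    have h2 : ((D ^ k : Matrix.SpecialLinearGroup (Fin 2) ℂ) : Matrix (Fin 2) (Fin 2) ℂ)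
        = !![l, 0; 0, l⁻¹] ^ k := by rw [Matrix.SpecialLinearGroup.coe_pow, hD]
    rw [dpow] at h2
    have := congrArg (fun X : Matrix (Fin 2) (Fin 2) ℂ => X 0 0) h2
    simp at this h1
    rw [this] at h1
    exact h1
  obtain ⟨i, hik, hζi⟩ := hζ.eq_pow_of_pow_eq_one hlk
  have hωiD : ω ^ i = D := by
    apply Subtype.ext
    rw [hωpow i, hζi, hD]
  have hordi : orderOf (ω ^ i) = k := by rw [hωiD, hordD]
  have hfinω : Finite (Subgroup.zpowers ω) :=
    Nat.finite_of_card_ne_zero (by rw [Nat.card_zpowers, hordω]; omega)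
  have hzz : Subgroup.zpowers (ω ^ i) = Subgroup.zpowers ω := by
    apply Subgroup.eq_of_le_of_card_ge
    · exact Subgroup.zpowers_le.mpr ⟨(i : ℤ), by simp [zpow_natCast]⟩
    · rw [Nat.card_zpowers, Nat.card_zpowers, hordi, hordω]
  refine ⟨g, ?_⟩
  rw [hHz, MonoidHom.map_zpowers, ← hzz, hωiD]
  congr 1
end
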